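/- arXiv:2208.06873 — 7 statements merged into one kernel-verified Lean document; each statement's English description precedes it below -/
import Mathlib

section
/- Let s ∈ (0, 1/2] and set d_s = 2^{1−2s}·Γ(1−s)/Γ(s). Then for all y₁, y₂ ∈ ℝ, |ψ_s(y₁) − ψ_s(y₂)| ≤ (d_s/(2s)) · |y₁ − y₂|^{2s}; that is, ψ_s is Hölder continuous on ℝ of exponent 2s with constant d_s/(2s). -/
open MeasureTheory Real Filter Set

/-- The modified Bessel function of the second kind, for `y > 0` given by
`K_s(y) = ∫_0^∞ e^{−y·cosh t}·cosh(s·t) dt`. -/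
noncomputable def besselK (s y : ℝ) : ℝ :=
  ∫ t in Set.Ioi (0 : ℝ), Real.exp (-(y * Real.cosh t)) * Real.cosh (s * t)

/-- `ψ_s(y) = (2^{1−s}/Γ(s))·|y|^s·K_s(|y|)` for `y ≠ 0`, and `ψ_s(0) = 1`. -/
noncomputable def psi (s : ℝ) (y : ℝ) : ℝ :=
  if y = 0 then 1
  else (2 : ℝ) ^ (1 - s) / Real.Gamma s * |y| ^ s * besselK s |y|

namespace PsiHolderAux

open scoped Topology

/-- Heat-kernel type representation integral. -/
noncomputable def H (s y : ℝ) : ℝ :=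
  ∫ u in Set.Ioi (0 : ℝ), u ^ (s - 1) * Real.exp (-(u + y ^ 2 / (4 * u)))

lemma cont1 (s y : ℝ) :
    ContinuousOn (fun u : ℝ => u ^ (s - 1) * Real.exp (-(u + y ^ 2 / (4 * u)))) (Ioi 0) := by
  refine ContinuousOn.mul (ContinuousOn.rpow_const continuousOn_id
    fun u hu => Or.inl (ne_of_gt hu)) (ContinuousOn.rexp (ContinuousOn.neg
      (ContinuousOn.add continuousOn_id (ContinuousOn.div continuousOn_const (by fun_prop)
        fun u hu => by simp only [mem_Ioi] at hu; positivity))))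

lemma meas1 (s y : ℝ) :
    AEStronglyMeasurable (fun u : ℝ => u ^ (s - 1) * Real.exp (-(u + y ^ 2 / (4 * u))))
      (volume.restrict (Ioi 0)) :=
  (cont1 s y).aestronglyMeasurable measurableSet_Ioi

lemma bound1 (s y : ℝ) :
    ∀ᵐ u ∂(volume.restrict (Ioi (0:ℝ))),
      ‖u ^ (s - 1) * Real.exp (-(u + y ^ 2 / (4 * u)))‖ ≤ u ^ (s - 1) * Real.exp (-u) := by
  filter_upwards [ae_restrict_mem measurableSet_Ioi] with u hu
  simp only [mem_Ioi] at hu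
  have h1 : (0:ℝ) ≤ u ^ (s - 1) := Real.rpow_nonneg hu.le _
  rw [norm_mul, Real.norm_of_nonneg h1, Real.norm_of_nonneg (Real.exp_pos _).le]
  have : Real.exp (-(u + y ^ 2 / (4 * u))) ≤ Real.exp (-u) := by
    apply Real.exp_le_exp.mpr
    have : (0:ℝ) ≤ y ^ 2 / (4 * u) := div_nonneg (sq_nonneg y) (by linarith)
    linarith
  exact mul_le_mul_of_nonneg_left this h1

lemma base_integrable {s : ℝ} (hs : 0 < s) :
    IntegrableOn (fun u : ℝ => u ^ (s - 1) * Real.exp (-u)) (Ioi 0) :=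
  (Real.GammaIntegral_convergent hs).congr_fun (fun x _ => mul_comm _ _) measurableSet_Ioi

lemma integrable1 {s : ℝ} (hs : 0 < s) (y : ℝ) :
    IntegrableOn (fun u : ℝ => u ^ (s - 1) * Real.exp (-(u + y ^ 2 / (4 * u)))) (Ioi 0) :=
  Integrable.mono' (base_integrable hs) (meas1 s y) (bound1 s y)

/-- Change of variables `u = (y/2)e^{-t}`. -/
lemma H_eq (s y : ℝ) (hy : 0 < y) :
    H s y = (y/2) ^ s * ∫ t : ℝ, Real.exp (-(y * Real.cosh t)) * Real.exp (-(s * t)) := by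
  have hy2 : (0:ℝ) < y / 2 := by linarith
  have himg : Ioi (0:ℝ) = (fun t : ℝ => y/2 * Real.exp (-t)) '' univ := by
    ext u
    simp only [mem_image, mem_univ, true_and, mem_Ioi]
    constructor
    · intro hu
      refine ⟨Real.log (y / (2 * u)), ?_⟩
      rw [← Real.log_inv, Real.exp_log (by positivity)]
      field_simp
    · rintro ⟨t, rfl⟩; positivity
  have hderiv : ∀ t ∈ (univ : Set ℝ), HasDerivWithinAt (fun t : ℝ => y/2 * Real.exp (-t))
      (-(y/2 * Real.exp (-t))) univ t := by
    intro t _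
    have : HasDerivAt (fun t : ℝ => y/2 * Real.exp (-t)) (y/2 * (Real.exp (-t) * (-1))) t :=
      (((hasDerivAt_id t).neg).exp).const_mul (y/2)
    refine HasDerivAt.hasDerivWithinAt ?_
    exact this.congr_deriv (by ring)
  have hinj : InjOn (fun t : ℝ => y/2 * Real.exp (-t)) univ := by
    intro a _ b _ h
    simp only at h
    have := mul_left_cancel₀ (ne_of_gt hy2) h
    have := Real.exp_injective this
    linarith
  rw [H, himg, integral_image_eq_integral_abs_deriv_smul MeasurableSet.univ hderiv hinj,
    Measure.restrict_univ]
  rw [← integral_const_mul]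
  congr 1
  ext t
  have he : (0:ℝ) < Real.exp (-t) := Real.exp_pos _
  have hv : (0:ℝ) < y/2 * Real.exp (-t) := by positivity
  rw [abs_neg, abs_of_pos hv, smul_eq_mul]
  have e1 : (y/2 * Real.exp (-t)) ^ (s-1) = (y/2) ^ (s-1) * Real.exp (-t) ^ (s-1) :=
    Real.mul_rpow hy2.le he.le
  have e2 : Real.exp (-t) ^ (s-1) = Real.exp ((-t) * (s-1)) := (Real.exp_mul _ _).symm
  have e3 : y/2 * Real.exp (-t) + y ^ 2 / (4 * (y/2 * Real.exp (-t))) = y * Real.cosh t := by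
    rw [Real.cosh_eq, Real.exp_neg]
    field_simp
    ring
  rw [e1, e2, e3]
  have e4 : (y/2) ^ s = (y/2) ^ (s-1) * (y/2) := by
    rw [← Real.rpow_add_one (ne_of_gt hy2)]; ring_nf
  have e5 : Real.exp (-t) * Real.exp (-t * (s-1)) = Real.exp (-(s * t)) := by
    rw [← Real.exp_add]; congr 1; ring
  rw [e4]
  linear_combination (y/2) * (y/2) ^ (s-1) * Real.exp (-(y * Real.cosh t)) * e5

lemma cosh_lb (t : ℝ) : t ^ 2 / 8 ≤ Real.cosh t := by
  rw [← Real.cosh_abs, Real.cosh_eq]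
  have h1 : 1 + |t|/2 ≤ Real.exp (|t|/2) := Real.add_one_le_exp (|t|/2) |>.trans_eq' (by ring)
  have h2 : Real.exp |t| = Real.exp (|t|/2) ^ 2 := by
    rw [← Real.exp_nat_mul]; congr 1; push_cast; ring
  have h3 : (0:ℝ) < Real.exp (-|t|) := Real.exp_pos _
  have h4 : (0:ℝ) ≤ |t| := abs_nonneg t
  nlinarith [sq_abs t]

lemma gauss_integrable {y a : ℝ} (hy : 0 < y) (ha : |a| ≤ 1/2) :
    Integrable (fun t : ℝ => Real.exp (-(y * Real.cosh t)) * Real.exp (a * t)) := by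
  refine Integrable.mono' ((integrable_exp_neg_mul_sq (by linarith : (0:ℝ) < y/16)).const_mul
    (Real.exp (1/y))) ?_ (ae_of_all _ fun t => ?_)
  · exact (Continuous.mul (by fun_prop) (by fun_prop)).aestronglyMeasurable
  · rw [Real.norm_of_nonneg (by positivity), ← Real.exp_add, ← Real.exp_add]
    apply Real.exp_le_exp.mpr
    have h1 : a * t ≤ |t| / 2 := by
      calc a * t ≤ |a * t| := le_abs_self _
      _ = |a| * |t| := abs_mul a t
      _ ≤ 1/2 * |t| := by nlinarith [abs_nonneg t]
      _ = |t| / 2 := by ring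
    have h2 := cosh_lb t
    have h3 : y * (t^2/8) ≤ y * Real.cosh t := by nlinarith
    have key : |t|/2 - y*t^2/16 ≤ 1/y := by
      rw [le_div_iff₀ hy]
      have e : y^2 * t^2 = (y*|t|)^2 := by rw [mul_pow, sq_abs]
      nlinarith [sq_nonneg (y*|t| - 4), e]
    linarith

/-- Reflection: the full-line integral equals `2 K_s(y)`. -/
lemma line_eq (s y : ℝ) (hs0 : 0 < s) (hs1 : s ≤ 1/2) (hy : 0 < y) :
    (∫ t : ℝ, Real.exp (-(y * Real.cosh t)) * Real.exp (-(s * t))) = 2 * besselK s y := by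
  have habs : |(-s)| ≤ 1/2 := by rw [abs_neg, abs_of_pos hs0]; linarith
  have habs' : |s| ≤ 1/2 := by rw [abs_of_pos hs0]; linarith
  have hint : Integrable (fun t : ℝ => Real.exp (-(y * Real.cosh t)) * Real.exp (-(s * t))) := by
    have := gauss_integrable hy habs
    simpa only [neg_mul] using this
  have hint' : Integrable (fun t : ℝ => Real.exp (-(y * Real.cosh t)) * Real.exp (s * t)) :=
    gauss_integrable hy habs'
  rw [← intervalIntegral.integral_Iic_add_Ioi hint.integrableOn hint.integrableOn]
  have e1 : (∫ t in Iic (0:ℝ), Real.exp (-(y * Real.cosh t)) * Real.exp (-(s * t)))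
      = ∫ t in Ioi (0:ℝ), Real.exp (-(y * Real.cosh t)) * Real.exp (s * t) := by
    rw [show Iic (0:ℝ) = Iic (-0) by norm_num, ← integral_comp_neg_Ioi]
    refine setIntegral_congr_fun measurableSet_Ioi fun t _ => ?_
    rw [Real.cosh_neg]
    congr 1
    ring_nf
  rw [e1, ← integral_add hint'.integrableOn hint.integrableOn, besselK, ← integral_const_mul]
  refine setIntegral_congr_fun measurableSet_Ioi fun t _ => ?_
  rw [Real.cosh_eq (s*t)]
  ring

/-- The representation `psi s y = Γ(s)⁻¹ H s y`. -/
lemma psi_eq {s : ℝ} (hs0 : 0 < s) (hs1 : s ≤ 1/2) (y : ℝ) :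
    psi s y = (Real.Gamma s)⁻¹ * H s y := by
  have hG : (0:ℝ) < Real.Gamma s := Real.Gamma_pos_of_pos hs0
  by_cases hy : y = 0
  · subst hy
    have : H s 0 = Real.Gamma s := by
      rw [H, Real.Gamma_eq_integral hs0]
      refine setIntegral_congr_fun measurableSet_Ioi fun u hu => ?_
      simp only [mem_Ioi] at hu
      rw [mul_comm]
      norm_num
    rw [psi, if_pos rfl, this, inv_mul_cancel₀ (ne_of_gt hG)]
  · have hay : 0 < |y| := abs_pos.mpr hy
    have hH : H s y = H s |y| := by
      rw [H, H]
      congr 1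
      ext u
      rw [sq_abs]
    rw [psi, if_neg hy, hH, H_eq s |y| hay, line_eq s |y| hs0 hs1 hay]
    have h2 : (|y|/2) ^ s = |y| ^ s / 2 ^ s := Real.div_rpow (abs_nonneg y) (by norm_num : (0:ℝ) ≤ 2) s
    have h3 : (2:ℝ) ^ (1 - s) = 2 / 2 ^ s := by
      rw [Real.rpow_sub (by norm_num : (0:ℝ) < 2), Real.rpow_one]
    have h4 : (0:ℝ) < (2:ℝ) ^ s := Real.rpow_pos_of_pos (by norm_num) s
    rw [h2, h3]
    field_simp

/-- Gamma-type substitution `u = c/v`. -/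
lemma gamma_sub {s : ℝ} (c : ℝ) (hs1 : s < 1) (hc : 0 < c) :
    (∫ u in Ioi (0:ℝ), u ^ (s - 2) * Real.exp (-(c / u))) = c ^ (s-1) * Real.Gamma (1 - s) := by
  have himg : Ioi (0:ℝ) = (fun v : ℝ => c / v) '' Ioi 0 := by
    ext u
    simp only [mem_image, mem_Ioi]
    constructor
    · intro hu; exact ⟨c / u, by positivity, by field_simp⟩
    · rintro ⟨v, hv, rfl⟩; positivity
  have hderiv : ∀ v ∈ Ioi (0:ℝ), HasDerivWithinAt (fun v : ℝ => c / v) (-(c / v ^ 2)) (Ioi 0) v := by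
    intro v hv
    simp only [mem_Ioi] at hv
    have : HasDerivAt (fun v : ℝ => c * v⁻¹) (c * (-(v ^ 2)⁻¹)) v :=
      (hasDerivAt_inv (ne_of_gt hv)).const_mul c
    have h2 : HasDerivAt (fun v : ℝ => c / v) (c * (-(v ^ 2)⁻¹)) v := by
      simpa only [div_eq_mul_inv] using this
    refine HasDerivAt.hasDerivWithinAt ?_
    exact h2.congr_deriv (by ring)
  have hinj : InjOn (fun v : ℝ => c / v) (Ioi 0) := by
    intro a ha b hb h
    simp only [mem_Ioi] at ha hb
    simp only at h
    field_simp at h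
    exact h.symm
  rw [himg, integral_image_eq_integral_abs_deriv_smul measurableSet_Ioi hderiv hinj]
  rw [Real.Gamma_eq_integral (by linarith : (0:ℝ) < 1 - s), ← integral_const_mul]
  refine setIntegral_congr_fun measurableSet_Ioi fun v hv => ?_
  simp only [mem_Ioi] at hv
  have hv' : v ≠ 0 := ne_of_gt hv
  have h1 : |(-(c / v ^ 2))| = c / v ^ 2 := by rw [abs_neg, abs_of_pos (by positivity)]
  have h2 : (c / v) ^ (s - 2) = c ^ (s-2) * v ^ (2 - s) := by
    rw [Real.div_rpow hc.le (le_of_lt hv), div_eq_mul_inv, ← Real.rpow_neg (le_of_lt hv), neg_sub]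
  have h3 : c / (c / v) = v := by field_simp
  have h4 : c ^ (s-1) = c ^ (s-2) * c := by rw [← Real.rpow_add_one (ne_of_gt hc)]; ring_nf
  have h5 : v ^ (2-s) / (v:ℝ) ^ (2:ℕ) = v ^ (-s) := by
    rw [← Real.rpow_natCast v 2, ← Real.rpow_sub hv]; norm_num
  rw [h1, smul_eq_mul, h3, h2, h4, show (1:ℝ)-s-1 = -s by ring, ← h5]
  field_simp

lemma gamma_sub_integrable {s : ℝ} (c : ℝ) (hs1 : s < 1) (hc : 0 < c) :
    IntegrableOn (fun u : ℝ => u ^ (s - 2) * Real.exp (-(c / u))) (Ioi 0) := by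
  have himg : Ioi (0:ℝ) = (fun v : ℝ => c / v) '' Ioi 0 := by
    ext u
    simp only [mem_image, mem_Ioi]
    constructor
    · intro hu; exact ⟨c / u, by positivity, by field_simp⟩
    · rintro ⟨v, hv, rfl⟩; positivity
  have hderiv : ∀ v ∈ Ioi (0:ℝ), HasDerivWithinAt (fun v : ℝ => c / v) (-(c / v ^ 2)) (Ioi 0) v := by
    intro v hv
    simp only [mem_Ioi] at hv
    have : HasDerivAt (fun v : ℝ => c * v⁻¹) (c * (-(v ^ 2)⁻¹)) v :=
      (hasDerivAt_inv (ne_of_gt hv)).const_mul c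
    have h2 : HasDerivAt (fun v : ℝ => c / v) (c * (-(v ^ 2)⁻¹)) v := by
      simpa only [div_eq_mul_inv] using this
    refine HasDerivAt.hasDerivWithinAt ?_
    exact h2.congr_deriv (by ring)
  have hinj : InjOn (fun v : ℝ => c / v) (Ioi 0) := by
    intro a ha b hb h
    simp only [mem_Ioi] at ha hb
    simp only at h
    field_simp at h
    exact h.symm
  rw [himg]
  rw [integrableOn_image_iff_integrableOn_abs_deriv_smul measurableSet_Ioi hderiv hinj]
  have hbase : IntegrableOn (fun v : ℝ => c ^ (s-1) * (Real.exp (-v) * v ^ (1 - s - 1))) (Ioi 0) :=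
    ((Real.GammaIntegral_convergent (by linarith : (0:ℝ) < 1 - s)).const_mul _)
  refine hbase.congr_fun (fun v hv => ?_) measurableSet_Ioi
  simp only [mem_Ioi] at hv
  have hv' : v ≠ 0 := ne_of_gt hv
  have h1 : |(-(c / v ^ 2))| = c / v ^ 2 := by rw [abs_neg, abs_of_pos (by positivity)]
  have h2 : (c / v) ^ (s - 2) = c ^ (s-2) * v ^ (2 - s) := by
    rw [Real.div_rpow hc.le (le_of_lt hv), div_eq_mul_inv, ← Real.rpow_neg (le_of_lt hv), neg_sub]
  have h3 : c / (c / v) = v := by field_simp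
  have h4 : c ^ (s-1) = c ^ (s-2) * c := by rw [← Real.rpow_add_one (ne_of_gt hc)]; ring_nf
  have h5 : v ^ (2-s) / (v:ℝ) ^ (2:ℕ) = v ^ (-s) := by
    rw [← Real.rpow_natCast v 2, ← Real.rpow_sub hv]; norm_num
  beta_reduce
  rw [h1, smul_eq_mul, h3, h2, h4, show (1:ℝ)-s-1 = -s by ring, ← h5]
  field_simp

/-- Differentiation under the integral sign for `H`. -/
lemma hasDerivAt_H {s : ℝ} (hs0 : 0 < s) {x : ℝ} (hx : 0 < x) :
    IntegrableOn (fun u : ℝ => -(x/(2*u)) * (u ^ (s-1) * Real.exp (-(u + x^2/(4*u))))) (Ioi 0)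
      ∧ HasDerivAt (H s)
        (∫ u in Ioi (0:ℝ), -(x/(2*u)) * (u ^ (s-1) * Real.exp (-(u + x^2/(4*u))))) x := by
  have key := hasDerivAt_integral_of_dominated_loc_of_deriv_le
    (F := fun (z : ℝ) (u : ℝ) => u ^ (s-1) * Real.exp (-(u + z^2/(4*u))))
    (F' := fun (z : ℝ) (u : ℝ) => -(z/(2*u)) * (u ^ (s-1) * Real.exp (-(u + z^2/(4*u)))))
    (μ := volume.restrict (Ioi 0)) (x₀ := x)
    (bound := fun u => (12/x) * (u ^ (s-1) * Real.exp (-u)))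
    (Metric.ball_mem_nhds x (half_pos hx)) (Eventually.of_forall fun z => meas1 s z) (integrable1 hs0 x)
    ?_ ?_ ?_ ?_
  · exact key
  · -- measurability of F' x
    refine ContinuousOn.aestronglyMeasurable ?_ measurableSet_Ioi
    refine ContinuousOn.mul ?_ (cont1 s x)
    refine ContinuousOn.neg (ContinuousOn.div continuousOn_const (by fun_prop) ?_)
    intro u hu
    simp only [mem_Ioi] at hu
    positivity
  · -- bound
    filter_upwards [ae_restrict_mem measurableSet_Ioi] with u hu
    simp only [mem_Ioi] at hu
    intro z hz
    rw [Metric.mem_ball, Real.dist_eq] at hz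
    obtain ⟨hz1, hz2⟩ := abs_lt.mp hz
    have hz0 : x/2 < z := by linarith
    have hz3 : z < 3*x/2 := by linarith
    have hzpos : 0 < z := by linarith
    have hrp : (0:ℝ) ≤ u ^ (s-1) := Real.rpow_nonneg hu.le _
    have hu2 : (0:ℝ) < 2*u := by linarith
    have hz3' : z ≤ 3*x/2 := hz3.le
    have hb1 : z/(2*u) ≤ (3*x/2)/(2*u) := by gcongr
    have hb2 : Real.exp (-(u + z^2/(4*u))) ≤ Real.exp (-u) * (16*u/x^2) := by
      have hc1 : x^2/(16*u) ≤ z^2/(4*u) := by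
        rw [div_le_div_iff₀ (by positivity) (by positivity)]
        nlinarith [mul_pos (mul_pos (show (0:ℝ) < z + x/2 by linarith)
          (show (0:ℝ) < z - x/2 by linarith)) hu]
      have hc2 : Real.exp (-(u + z^2/(4*u))) ≤ Real.exp (-u) * Real.exp (-(x^2/(16*u))) := by
        rw [← Real.exp_add]
        apply Real.exp_le_exp.mpr
        linarith
      have hc3 : Real.exp (-(x^2/(16*u))) ≤ 16*u/x^2 := by
        rw [Real.exp_neg]
        have hp : (0:ℝ) < x^2/(16*u) := by positivity
        have he : x^2/(16*u) ≤ Real.exp (x^2/(16*u)) := by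
          have := Real.add_one_le_exp (x^2/(16*u)); linarith
        calc (Real.exp (x^2/(16*u)))⁻¹ ≤ (x^2/(16*u))⁻¹ := by
              apply inv_anti₀ hp he
        _ = 16*u/x^2 := by rw [inv_div]
      calc Real.exp (-(u + z^2/(4*u))) ≤ Real.exp (-u) * Real.exp (-(x^2/(16*u))) := hc2
      _ ≤ Real.exp (-u) * (16*u/x^2) := by
          exact mul_le_mul_of_nonneg_left hc3 (Real.exp_pos _).le
    have hnorm : ‖-(z / (2 * u)) * (u ^ (s - 1) * Real.exp (-(u + z ^ 2 / (4 * u))))‖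
        = z/(2*u) * (u ^ (s-1) * Real.exp (-(u + z^2/(4*u)))) := by
      rw [norm_mul, norm_neg, Real.norm_of_nonneg (by positivity), Real.norm_of_nonneg (by positivity)]
    rw [hnorm]
    calc z/(2*u) * (u ^ (s-1) * Real.exp (-(u + z^2/(4*u))))
        ≤ (3*x/2)/(2*u) * (u ^ (s-1) * (Real.exp (-u) * (16*u/x^2))) := by
          apply mul_le_mul hb1 (mul_le_mul_of_nonneg_left hb2 hrp) (by positivity) (by positivity)
    _ = 12/x * (u ^ (s-1) * Real.exp (-u)) := by
          have hx0 : x ≠ 0 := ne_of_gt hx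
          have hu0 : u ≠ 0 := ne_of_gt hu
          field_simp
          ring
  · exact (base_integrable hs0).const_mul _
  · -- differentiability
    filter_upwards [ae_restrict_mem measurableSet_Ioi] with u hu
    simp only [mem_Ioi] at hu
    intro z _
    have hd : HasDerivAt (fun z : ℝ => -(u + z^2/(4*u))) (-(2*z^(2-1)/(4*u))) z :=
      (((hasDerivAt_pow 2 z).div_const (4*u)).const_add u).neg
    have hd2 := (hd.exp).const_mul (u ^ (s-1))
    exact hd2.congr_deriv (by ring)

/-- Bound on the derivative of `H`. -/
lemma deriv_bound {s : ℝ} (hs0 : 0 < s) (hs1 : s ≤ 1/2) {x : ℝ} (hx : 0 < x) :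
    |∫ u in Ioi (0:ℝ), -(x/(2*u)) * (u ^ (s-1) * Real.exp (-(u + x^2/(4*u))))|
      ≤ 2 ^ (1-2*s) * Real.Gamma (1-s) * x ^ (2*s-1) := by
  have hs1' : s < 1 := by linarith
  have hc : (0:ℝ) < x^2/4 := by positivity
  have hF'int := (hasDerivAt_H hs0 hx).1
  have hMint : IntegrableOn (fun u : ℝ => (x/2) * (u ^ (s-2) * Real.exp (-((x^2/4) / u)))) (Ioi 0) :=
    (gamma_sub_integrable (x^2/4) hs1' hc).const_mul _
  calc |∫ u in Ioi (0:ℝ), -(x/(2*u)) * (u ^ (s-1) * Real.exp (-(u + x^2/(4*u))))|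
      ≤ ∫ u in Ioi (0:ℝ), |(-(x/(2*u)) * (u ^ (s-1) * Real.exp (-(u + x^2/(4*u)))))| := by
        simpa only [Real.norm_eq_abs] using norm_integral_le_integral_norm
          (μ := volume.restrict (Ioi 0))
          (fun u => -(x/(2*u)) * (u ^ (s-1) * Real.exp (-(u + x^2/(4*u)))))
  _ ≤ ∫ u in Ioi (0:ℝ), (x/2) * (u ^ (s-2) * Real.exp (-((x^2/4) / u))) := by
      refine setIntegral_mono_on hF'int.abs hMint measurableSet_Ioi fun u hu => ?_
      simp only [mem_Ioi] at hu
      have hu0 : u ≠ 0 := ne_of_gt hu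
      have h1 : |(-(x/(2*u)) * (u ^ (s-1) * Real.exp (-(u + x^2/(4*u)))))|
          = x/(2*u) * (u ^ (s-1) * Real.exp (-(u + x^2/(4*u)))) := by
        rw [abs_mul, abs_neg, abs_of_pos (by positivity), abs_of_pos (by positivity)]
      rw [h1]
      have h2 : u ^ (s-1) = u ^ (s-2) * u := by rw [← Real.rpow_add_one hu0]; ring_nf
      have h3 : Real.exp (-(u + x^2/(4*u))) ≤ Real.exp (-((x^2/4) / u)) := by
        apply Real.exp_le_exp.mpr
        rw [div_div]
        linarith
      calc x/(2*u) * (u ^ (s-1) * Real.exp (-(u + x^2/(4*u))))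
          ≤ x/(2*u) * (u ^ (s-1) * Real.exp (-((x^2/4) / u))) := by
            apply mul_le_mul_of_nonneg_left (mul_le_mul_of_nonneg_left h3
              (Real.rpow_nonneg hu.le _)) (by positivity)
      _ = (x/2) * (u ^ (s-2) * Real.exp (-((x^2/4) / u))) := by
            rw [h2]; field_simp
  _ = (x/2) * ((x^2/4) ^ (s-1) * Real.Gamma (1-s)) := by
      rw [integral_const_mul, gamma_sub (x^2/4) hs1' hc]
  _ = 2 ^ (1-2*s) * Real.Gamma (1-s) * x ^ (2*s-1) := by
      have e0 : x^2/4 = (x/2)^(2:ℕ) := by ring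
      have e1 : (x^2/4) ^ (s-1) = (x/2) ^ (2*(s-1)) := by
        rw [e0, ← Real.rpow_natCast (x/2) 2, ← Real.rpow_mul (by positivity)]
        norm_num
      have hx2 : (0:ℝ) < x/2 := by positivity
      have e2 : (x/2) * (x/2) ^ (2*(s-1)) = (x/2) ^ (2*s-1) := by
        rw [show 2*s-1 = 1 + 2*(s-1) by ring, Real.rpow_add hx2, Real.rpow_one]
      have e3 : (x/2) ^ (2*s-1) = x ^ (2*s-1) * 2 ^ (1-2*s) := by
        rw [Real.div_rpow hx.le (by norm_num : (0:ℝ) ≤ 2), div_eq_mul_inv,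
          ← Real.rpow_neg (by norm_num : (0:ℝ) ≤ 2), neg_sub]
      rw [e1, ← mul_assoc, e2, e3]
      ring

/-- `H s` is antitone on nonnegative reals. -/
lemma H_anti {s : ℝ} (hs0 : 0 < s) {p q : ℝ} (hq : 0 ≤ q) (hqp : q ≤ p) : H s p ≤ H s q := by
  refine setIntegral_mono_on (integrable1 hs0 p) (integrable1 hs0 q) measurableSet_Ioi
    fun u hu => ?_
  simp only [mem_Ioi] at hu
  have h1 : q^2/(4*u) ≤ p^2/(4*u) := by
    have hq2 : q^2 ≤ p^2 := by nlinarith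
    have h4u : (0:ℝ) < 4*u := by linarith
    gcongr
  have h2 : Real.exp (-(u + p^2/(4*u))) ≤ Real.exp (-(u + q^2/(4*u))) := by
    apply Real.exp_le_exp.mpr; linarith
  exact mul_le_mul_of_nonneg_left h2 (Real.rpow_nonneg hu.le _)

/-- The key inequality, positive case. -/
lemma key_pos {s : ℝ} (hs0 : 0 < s) (hs1 : s ≤ 1/2) {p q : ℝ} (hq : 0 < q) (hqp : q ≤ p) :
    H s q - H s p ≤ (2 ^ (1-2*s) * Real.Gamma (1-s) / (2*s)) * (p ^ (2*s) - q ^ (2*s)) := by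
  set c0 : ℝ := 2 ^ (1-2*s) * Real.Gamma (1-s) with hc0
  have hs2 : (2*s) ≠ 0 := by positivity
  have hder : ∀ r : ℝ, 0 < r → HasDerivAt (fun r : ℝ => H s r + c0/(2*s) * r ^ (2*s))
      ((∫ u in Ioi (0:ℝ), -(r/(2*u)) * (u ^ (s-1) * Real.exp (-(u + r^2/(4*u)))))
        + c0/(2*s) * (2*s * r ^ (2*s-1))) r := by
    intro r hr
    exact ((hasDerivAt_H hs0 hr).2).add
      ((Real.hasDerivAt_rpow_const (Or.inl (ne_of_gt hr))).const_mul (c0/(2*s)))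
  have hmono : MonotoneOn (fun r : ℝ => H s r + c0/(2*s) * r ^ (2*s)) (Ici q) := by
    apply monotoneOn_of_deriv_nonneg (convex_Ici q)
    · intro r hr
      exact ((hder r (lt_of_lt_of_le hq hr)).continuousAt).continuousWithinAt
    · rw [interior_Ici]
      intro r hr
      exact ((hder r (lt_trans hq hr)).differentiableAt).differentiableWithinAt
    · rw [interior_Ici]
      intro r hr
      have hr0 : 0 < r := lt_trans hq hr
      rw [(hder r hr0).deriv]
      have hbd := deriv_bound hs0 hs1 hr0
      have e1 : c0/(2*s) * (2*s * r ^ (2*s-1)) = c0 * r ^ (2*s-1) := by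
        field_simp
      rw [e1]
      rw [← hc0] at hbd
      have := neg_abs_le (∫ u in Ioi (0:ℝ), -(r/(2*u)) * (u ^ (s-1) * Real.exp (-(u + r^2/(4*u)))))
      linarith
  have h2 := hmono self_mem_Ici (mem_Ici.mpr hqp) hqp
  simp only at h2
  have e2 : c0/(2*s) * (p ^ (2*s) - q ^ (2*s)) = c0/(2*s) * p ^ (2*s) - c0/(2*s) * q ^ (2*s) := by
    ring
  rw [hc0] at e2 ⊢
  linarith [e2]

/-- Right-continuity of `H s` at `0`. -/
lemma H_cont0 {s : ℝ} (hs0 : 0 < s) : Tendsto (H s) (𝓝[>] (0:ℝ)) (𝓝 (H s 0)) := by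
  apply tendsto_integral_filter_of_dominated_convergence
    (bound := fun u : ℝ => u ^ (s-1) * Real.exp (-u))
  · exact Eventually.of_forall fun y => meas1 s y
  · exact Eventually.of_forall fun y => bound1 s y
  · exact base_integrable hs0
  · filter_upwards [ae_restrict_mem measurableSet_Ioi] with u hu
    simp only [mem_Ioi] at hu
    have hcont : Continuous (fun y : ℝ => u ^ (s-1) * Real.exp (-(u + y^2/(4*u)))) := by
      fun_prop
    exact (hcont.tendsto 0).mono_left nhdsWithin_le_nhds
  
/-- The key inequality, including zero. -/
lemma key {s : ℝ} (hs0 : 0 < s) (hs1 : s ≤ 1/2) {p q : ℝ} (hq : 0 ≤ q) (hqp : q ≤ p) :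
    H s q - H s p ≤ (2 ^ (1-2*s) * Real.Gamma (1-s) / (2*s)) * (p ^ (2*s) - q ^ (2*s)) := by
  rcases hq.lt_or_eq with hq' | hq'
  · exact key_pos hs0 hs1 hq' hqp
  · subst hq'
    rcases hqp.lt_or_eq with hp | hp
    · -- q = 0 < p : take the limit
      set c1 : ℝ := 2 ^ (1-2*s) * Real.Gamma (1-s) / (2*s) with hc1
      have ht1 : Tendsto (H s) (𝓝[>] (0:ℝ)) (𝓝 (H s 0)) := H_cont0 hs0
      have htr : Tendsto (fun r : ℝ => r ^ (2*s)) (𝓝[>] (0:ℝ)) (𝓝 ((0:ℝ) ^ (2*s))) := by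
        refine Tendsto.mono_left ?_ nhdsWithin_le_nhds
        exact (Real.continuousAt_rpow_const 0 (2*s) (Or.inr (by positivity))).tendsto
      have ht2 : Tendsto (fun r : ℝ => c1 * (p ^ (2*s) - r ^ (2*s)) + H s p) (𝓝[>] (0:ℝ))
          (𝓝 (c1 * (p ^ (2*s) - (0:ℝ) ^ (2*s)) + H s p)) := by
        exact (Tendsto.const_mul c1 ((tendsto_const_nhds).sub htr)).add tendsto_const_nhds
      have hev : ∀ᶠ r in 𝓝[>] (0:ℝ), H s r ≤ c1 * (p ^ (2*s) - r ^ (2*s)) + H s p := by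
        filter_upwards [Ioo_mem_nhdsGT_of_mem (show (0:ℝ) ∈ Ico 0 p from ⟨le_refl 0, hp⟩)]
          with r hr
        have := key_pos hs0 hs1 hr.1 hr.2.le
        rw [← hc1] at this
        linarith
      have := le_of_tendsto_of_tendsto ht1 ht2 hev
      linarith
    · subst hp; simp

/-- Subadditivity of `rpow` with exponent in `(0,1]`. -/
lemma rpow_sub_le {a b p : ℝ} (hb : 0 ≤ b) (hba : b ≤ a) (hp : 0 ≤ p) (hp1 : p ≤ 1) :
    a ^ p - b ^ p ≤ (a - b) ^ p := by
  have hx : (0:ℝ) ≤ a - b := by linarith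
  have h := NNReal.rpow_add_le_add_rpow (a - b).toNNReal b.toNNReal hp hp1
  have h2 : ((a - b).toNNReal + b.toNNReal) = a.toNNReal := by
    rw [← Real.toNNReal_add hx hb]; norm_num
  rw [h2] at h
  have := NNReal.coe_le_coe.mpr h
  rw [NNReal.coe_add] at this
  simp only [NNReal.coe_rpow, Real.coe_toNNReal _ (by linarith : (0:ℝ) ≤ a),
    Real.coe_toNNReal _ hx, Real.coe_toNNReal _ hb] at this
  linarith

end PsiHolderAux

/-- for `s ∈ (0, 1/2]` and `d_s = 2^{1−2s}·Γ(1−s)/Γ(s)`, `ψ_s` is Hölder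
continuous of exponent `2s` with constant `d_s/(2s)`. -/
theorem psi_holder (s : ℝ) (hs0 : 0 < s) (hs1 : s ≤ 1 / 2)
    (d : ℝ) (hd : d = (2 : ℝ) ^ (1 - 2 * s) * Real.Gamma (1 - s) / Real.Gamma s) :
    ∀ y₁ y₂ : ℝ, |psi s y₁ - psi s y₂| ≤ d / (2 * s) * |y₁ - y₂| ^ (2 * s) := by
  intro y₁ y₂
  have hG : (0:ℝ) < Real.Gamma s := Real.Gamma_pos_of_pos hs0
  have hG1 : (0:ℝ) < Real.Gamma (1-s) := Real.Gamma_pos_of_pos (by linarith)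
  set c1 : ℝ := 2 ^ (1-2*s) * Real.Gamma (1-s) / (2*s) with hc1
  have hc1pos : 0 ≤ c1 := by
    rw [hc1]; positivity
  have key2 : ∀ p q : ℝ, 0 ≤ q → q ≤ p →
      |PsiHolderAux.H s q - PsiHolderAux.H s p| ≤ c1 * (p - q) ^ (2*s) := by
    intro p q hq hqp
    have h1 := PsiHolderAux.key hs0 hs1 hq hqp
    have h2 : PsiHolderAux.H s p ≤ PsiHolderAux.H s q := PsiHolderAux.H_anti hs0 hq hqp
    rw [abs_of_nonneg (by linarith)]
    have h3 : p ^ (2*s) - q ^ (2*s) ≤ (p - q) ^ (2*s) :=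
      PsiHolderAux.rpow_sub_le hq hqp (by positivity) (by linarith)
    calc PsiHolderAux.H s q - PsiHolderAux.H s p ≤ c1 * (p ^ (2*s) - q ^ (2*s)) := h1
    _ ≤ c1 * (p - q) ^ (2*s) := mul_le_mul_of_nonneg_left h3 hc1pos
  have habs : ∀ y : ℝ, psi s y = (Real.Gamma s)⁻¹ * PsiHolderAux.H s |y| := by
    intro y
    rw [PsiHolderAux.psi_eq hs0 hs1 y]
    congr 1
    rw [PsiHolderAux.H, PsiHolderAux.H]
    congr 1
    ext u
    rw [sq_abs]
  have hmain : ∀ y₁ y₂ : ℝ, |y₂| ≤ |y₁| →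
      |psi s y₁ - psi s y₂| ≤ d / (2 * s) * |y₁ - y₂| ^ (2 * s) := by
    intro y₁ y₂ hle
    set a : ℝ := |y₁| with ha
    set b : ℝ := |y₂| with hb
    rw [habs y₁, habs y₂, ← mul_sub, abs_mul, abs_of_pos (inv_pos.mpr hG), abs_sub_comm]
    have h4 := key2 a b (abs_nonneg _) hle
    have h5 : (a - b) ^ (2*s) ≤ |y₁ - y₂| ^ (2*s) := by
      apply Real.rpow_le_rpow (by linarith) ?_ (by positivity)
      rw [ha, hb]
      exact abs_sub_abs_le_abs_sub y₁ y₂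
    have h6 : |PsiHolderAux.H s b - PsiHolderAux.H s a| ≤ c1 * |y₁ - y₂| ^ (2*s) := by
      calc |PsiHolderAux.H s b - PsiHolderAux.H s a| ≤ c1 * (a - b) ^ (2*s) := h4
      _ ≤ c1 * |y₁ - y₂| ^ (2*s) := mul_le_mul_of_nonneg_left h5 hc1pos
    calc (Real.Gamma s)⁻¹ * |PsiHolderAux.H s b - PsiHolderAux.H s a|
        ≤ (Real.Gamma s)⁻¹ * (c1 * |y₁ - y₂| ^ (2*s)) :=
          mul_le_mul_of_nonneg_left h6 (inv_pos.mpr hG).le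
    _ = d / (2 * s) * |y₁ - y₂| ^ (2 * s) := by
        rw [hd, hc1]
        field_simp
  rcases le_total |y₂| |y₁| with h | h
  · exact hmain y₁ y₂ h
  · rw [abs_sub_comm, show |y₁ - y₂| = |y₂ - y₁| from abs_sub_comm _ _]
    exact hmain y₂ y₁ h
end

section
/- Let b ∈ (−1,1) and let ψ : ℝ → ℝ be an even function, differentiable almost everywhere with ψ(y) = ψ(0) + ∫_0^y ψ'(t) dt for all y ∈ ℝ, and suppose A := ∫_ℝ |y|^b·ψ'(y)² dy < ∞. Then for all y₁, y₂ ∈ ℝ, |ψ(y₂) − ψ(y₁)|² ≤ (1/(1−b)) · A · | |y₂|^{1−b} − |y₁|^{1−b} |. -/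
open MeasureTheory Real Filter Set

private lemma rpow_sq_aux {x : ℝ} (hx : 0 ≤ x) (p : ℝ) : (x ^ p) ^ 2 = x ^ (p * 2) := by
  rw [← Real.rpow_natCast (x ^ p) 2, ← Real.rpow_mul hx]
  norm_num

private lemma key_est (b : ℝ) (hb0 : -1 < b) (hb1 : b < 1)
    (ψ : ℝ → ℝ)
    (hψftc : ∀ y : ℝ, ψ y = ψ 0 + ∫ t in (0 : ℝ)..y, deriv ψ t)
    (hψint : Integrable (fun y : ℝ => |y| ^ b * (deriv ψ y) ^ 2))
    {a c : ℝ} (ha : 0 ≤ a) (hac : a ≤ c) :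
    (ψ c - ψ a) ^ 2
      ≤ 1 / (1 - b) * (∫ y : ℝ, |y| ^ b * (deriv ψ y) ^ 2) * (c ^ (1 - b) - a ^ (1 - b)) := by
  have hmb : (-1 : ℝ) < -b := by linarith
  have hc0 : (0 : ℝ) ≤ c := ha.trans hac
  have hdm : Measurable (deriv ψ) := measurable_deriv ψ
  have hg2int : IntegrableOn (fun t : ℝ => t ^ (-b)) (Ioc a c) :=
    (intervalIntegrable_iff_integrableOn_Ioc_of_le hac).mp
      (intervalIntegral.intervalIntegrable_rpow' hmb)
  have hg2int0 : IntegrableOn (fun t : ℝ => t ^ (-b)) (Ioc 0 c) :=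
    (intervalIntegrable_iff_integrableOn_Ioc_of_le hc0).mp
      (intervalIntegral.intervalIntegrable_rpow' hmb)
  -- integrability of deriv ψ on Ioc 0 c
  have hD : IntegrableOn (deriv ψ) (Ioc 0 c) := by
    have hbound : IntegrableOn
        (fun t : ℝ => (|t| ^ b * (deriv ψ t) ^ 2 + t ^ (-b)) / 2) (Ioc 0 c) :=
      (hψint.integrableOn.add hg2int0).div_const 2
    refine Integrable.mono' hbound (hdm.aestronglyMeasurable.restrict) ?_
    filter_upwards [ae_restrict_mem measurableSet_Ioc] with t ht
    have ht0 : 0 < t := ht.1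
    have habs : |t| = t := abs_of_pos ht0
    have h1 : ‖deriv ψ t‖ = (|t| ^ (b / 2) * |deriv ψ t|) * |t| ^ (-(b / 2)) := by
      rw [Real.norm_eq_abs, mul_comm (|t| ^ (b / 2)) (|deriv ψ t|), mul_assoc,
        ← Real.rpow_add (abs_pos.mpr ht0.ne')]
      simp
    rw [h1]
    have h2 := two_mul_le_add_sq (|t| ^ (b / 2) * |deriv ψ t|) (|t| ^ (-(b / 2)))
    have h3 : (|t| ^ (b / 2) * |deriv ψ t|) ^ 2 = |t| ^ b * (deriv ψ t) ^ 2 := by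
      rw [mul_pow, rpow_sq_aux (abs_nonneg t), sq_abs]
      norm_num
    have h4 : (|t| ^ (-(b / 2))) ^ 2 = t ^ (-b) := by
      rw [rpow_sq_aux (abs_nonneg t), habs]
      norm_num
    nlinarith [h2, h3, h4]
  -- FTC
  have h0a : IntervalIntegrable (deriv ψ) volume 0 a :=
    (intervalIntegrable_iff_integrableOn_Ioc_of_le ha).mpr
      (hD.mono_set (Ioc_subset_Ioc le_rfl hac))
  have h0c : IntervalIntegrable (deriv ψ) volume 0 c :=
    (intervalIntegrable_iff_integrableOn_Ioc_of_le hc0).mpr hD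
  have heq : ψ c - ψ a = ∫ t in a..c, deriv ψ t := by
    rw [hψftc c, hψftc a]
    have := intervalIntegral.integral_interval_sub_left h0c h0a
    linarith [this]
  -- Cauchy-Schwarz
  set μ0 := volume.restrict (Ioc a c) with hμ0
  set F : ℝ → ℝ := fun t => |t| ^ (b / 2) * |deriv ψ t| with hF
  set G : ℝ → ℝ := fun t => |t| ^ (-(b / 2)) with hG
  have hne : ∀ t ∈ Ioc a c, |t| ≠ 0 ∨ (0:ℝ) ≤ b/2 :=
    fun t ht => Or.inl (abs_ne_zero.mpr (ha.trans_lt ht.1).ne')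
  have hcont1 : ContinuousOn (fun t : ℝ => |t| ^ (b / 2)) (Ioc a c) :=
    continuous_abs.continuousOn.rpow_const hne
  have hcont2 : ContinuousOn G (Ioc a c) :=
    continuous_abs.continuousOn.rpow_const
      (fun t ht => Or.inl (abs_ne_zero.mpr (ha.trans_lt ht.1).ne'))
  have hFmeas : AEStronglyMeasurable F μ0 :=
    (hcont1.aestronglyMeasurable measurableSet_Ioc).mul hdm.abs.aestronglyMeasurable.restrict
  have hGmeas : AEStronglyMeasurable G μ0 :=
    hcont2.aestronglyMeasurable measurableSet_Ioc
  have hF_nonneg : 0 ≤ᵐ[μ0] F :=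
    Eventually.of_forall fun t => mul_nonneg (Real.rpow_nonneg (abs_nonneg t) _) (abs_nonneg _)
  have hG_nonneg : 0 ≤ᵐ[μ0] G :=
    Eventually.of_forall fun t => Real.rpow_nonneg (abs_nonneg t) _
  have hFsq : ∀ t : ℝ, F t ^ 2 = |t| ^ b * (deriv ψ t) ^ 2 := by
    intro t
    rw [hF]
    simp only
    rw [mul_pow, rpow_sq_aux (abs_nonneg t), sq_abs]
    norm_num
  have hGsq : ∀ t : ℝ, G t ^ 2 = |t| ^ (-b) := by
    intro t
    rw [hG]
    simp only
    rw [rpow_sq_aux (abs_nonneg t)]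
    norm_num
  have hFsq_int : Integrable (fun t => F t ^ 2) μ0 := by
    simp only [hFsq]; exact hψint.integrableOn
  have hGsq_int : Integrable (fun t => G t ^ 2) μ0 := by
    refine hg2int.congr ?_
    filter_upwards [ae_restrict_mem measurableSet_Ioc] with t ht
    rw [hGsq t, abs_of_pos (ha.trans_lt ht.1)]
  have hFmem : MemLp F (ENNReal.ofReal 2) μ0 := by
    have : (ENNReal.ofReal 2) = 2 := by norm_num
    rw [this]
    exact (memLp_two_iff_integrable_sq hFmeas).mpr hFsq_int
  have hGmem : MemLp G (ENNReal.ofReal 2) μ0 := by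
    have : (ENNReal.ofReal 2) = 2 := by norm_num
    rw [this]
    exact (memLp_two_iff_integrable_sq hGmeas).mpr hGsq_int
  have hconj : (2 : ℝ).HolderConjugate 2 := Real.holderConjugate_iff.mpr ⟨one_lt_two, by norm_num⟩
  have hCS := integral_mul_le_Lp_mul_Lq_of_nonneg hconj hF_nonneg hG_nonneg hFmem hGmem
  -- ∫ F*G = ∫ |deriv ψ| over μ0
  have hFG : ∀ᵐ t ∂μ0, F t * G t = |deriv ψ t| := by
    filter_upwards [ae_restrict_mem measurableSet_Ioc] with t ht
    have ht0 : 0 < t := ha.trans_lt ht.1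
    rw [hF, hG]
    simp only
    rw [mul_comm (|t| ^ (b / 2)) (|deriv ψ t|), mul_assoc,
      ← Real.rpow_add (abs_pos.mpr ht0.ne')]
    simp
  have habsint : ∫ t, |deriv ψ t| ∂μ0 ≤ (∫ t, F t ^ 2 ∂μ0) ^ ((1:ℝ)/2) * (∫ t, G t ^ 2 ∂μ0) ^ ((1:ℝ)/2) := by
    calc ∫ t, |deriv ψ t| ∂μ0 = ∫ t, F t * G t ∂μ0 := (integral_congr_ae hFG).symm
      _ ≤ (∫ t, F t ^ (2:ℝ) ∂μ0) ^ ((1:ℝ)/2) * (∫ t, G t ^ (2:ℝ) ∂μ0) ^ ((1:ℝ)/2) := hCS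
      _ = (∫ t, F t ^ 2 ∂μ0) ^ ((1:ℝ)/2) * (∫ t, G t ^ 2 ∂μ0) ^ ((1:ℝ)/2) := by
          congr 1 <;> [skip; skip] <;> congr 1 <;> refine integral_congr_ae ?_
          · filter_upwards [hF_nonneg] with t ht
            rw [← Real.rpow_natCast (F t) 2]; norm_num
          · filter_upwards [hG_nonneg] with t ht
            rw [← Real.rpow_natCast (G t) 2]; norm_num
  -- bound |ψ c - ψ a|
  have hstep1 : |ψ c - ψ a| ≤ ∫ t, |deriv ψ t| ∂μ0 := by
    rw [heq]
    calc |∫ t in a..c, deriv ψ t| ≤ ∫ t in a..c, |deriv ψ t| :=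
          intervalIntegral.abs_integral_le_integral_abs hac
      _ = ∫ t, |deriv ψ t| ∂μ0 := by rw [intervalIntegral.integral_of_le hac]
  set IF := ∫ t, F t ^ 2 ∂μ0 with hIF
  set IG := ∫ t, G t ^ 2 ∂μ0 with hIG
  have hIFnn : 0 ≤ IF := integral_nonneg fun t => sq_nonneg _
  have hIGnn : 0 ≤ IG := integral_nonneg fun t => sq_nonneg _
  have hsq : (ψ c - ψ a) ^ 2 ≤ IF * IG := by
    have h1 : |ψ c - ψ a| ≤ IF ^ ((1:ℝ)/2) * IG ^ ((1:ℝ)/2) := hstep1.trans habsint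
    have h2 : (ψ c - ψ a) ^ 2 = |ψ c - ψ a| ^ 2 := (sq_abs _).symm
    rw [h2]
    calc |ψ c - ψ a| ^ 2 ≤ (IF ^ ((1:ℝ)/2) * IG ^ ((1:ℝ)/2)) ^ 2 :=
          pow_le_pow_left₀ (abs_nonneg _) h1 2
      _ = IF * IG := by
          rw [mul_pow, rpow_sq_aux hIFnn, rpow_sq_aux hIGnn]
          norm_num
  -- evaluate IG
  have hIGval : IG = (c ^ (1 - b) - a ^ (1 - b)) / (1 - b) := by
    have h1 : IG = ∫ t in Ioc a c, t ^ (-b) := by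
      rw [hIG]
      refine integral_congr_ae ?_
      filter_upwards [ae_restrict_mem measurableSet_Ioc] with t ht
      rw [hGsq t, abs_of_pos (ha.trans_lt ht.1)]
    rw [h1, ← intervalIntegral.integral_of_le hac,
      integral_rpow (Or.inl hmb)]
    norm_num
    ring_nf
  -- bound IF
  have hIFle : IF ≤ ∫ y : ℝ, |y| ^ b * (deriv ψ y) ^ 2 := by
    rw [hIF]
    simp only [hFsq]
    exact setIntegral_le_integral hψint
      (Eventually.of_forall fun t => mul_nonneg (Real.rpow_nonneg (abs_nonneg t) _) (sq_nonneg _))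
  have hIGfin : IF * IG ≤ (∫ y : ℝ, |y| ^ b * (deriv ψ y) ^ 2) * IG :=
    mul_le_mul_of_nonneg_right hIFle hIGnn
  calc (ψ c - ψ a) ^ 2 ≤ IF * IG := hsq
    _ ≤ (∫ y : ℝ, |y| ^ b * (deriv ψ y) ^ 2) * IG := hIGfin
    _ = 1 / (1 - b) * (∫ y : ℝ, |y| ^ b * (deriv ψ y) ^ 2) * (c ^ (1 - b) - a ^ (1 - b)) := by
        rw [hIGval]; ring

/-- for `b ∈ (−1,1)` and an even absolutely continuous `ψ` with
`A = ∫ |y|^b·ψ'(y)² dy < ∞`, one has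
`|ψ(y₂) − ψ(y₁)|² ≤ (1/(1−b))·A·| |y₂|^{1−b} − |y₁|^{1−b} |`. -/
theorem holder_from_weighted_energy_even (b : ℝ) (hb0 : -1 < b) (hb1 : b < 1)
    (ψ : ℝ → ℝ)
    (hψσ : ∀ y : ℝ, ψ (-y) = ψ y)
    (hψd : ∀ᵐ y : ℝ ∂volume, DifferentiableAt ℝ ψ y)
    (hψftc : ∀ y : ℝ, ψ y = ψ 0 + ∫ t in (0 : ℝ)..y, deriv ψ t)
    (hψint : Integrable (fun y : ℝ => |y| ^ b * (deriv ψ y) ^ 2)) :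
    ∀ y₁ y₂ : ℝ,
      |ψ y₂ - ψ y₁| ^ 2
        ≤ 1 / (1 - b) * (∫ y : ℝ, |y| ^ b * (deriv ψ y) ^ 2)
            * abs (|y₂| ^ (1 - b) - |y₁| ^ (1 - b)) := by
  intro y₁ y₂
  have hψabs : ∀ y : ℝ, ψ |y| = ψ y := by
    intro y
    rcases abs_cases y with ⟨h, _⟩ | ⟨h, _⟩
    · rw [h]
    · rw [h]; exact hψσ y
  have hb1' : (0 : ℝ) ≤ 1 - b := by linarith
  rcases le_total |y₁| |y₂| with h | h
  · have hkey := key_est b hb0 hb1 ψ hψftc hψint (abs_nonneg y₁) h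
    rw [hψabs, hψabs] at hkey
    have hro : |y₁| ^ (1 - b) ≤ |y₂| ^ (1 - b) :=
      Real.rpow_le_rpow (abs_nonneg y₁) h hb1'
    rw [sq_abs, abs_of_nonneg (sub_nonneg.mpr hro)]
    exact hkey
  · have hkey := key_est b hb0 hb1 ψ hψftc hψint (abs_nonneg y₂) h
    rw [hψabs, hψabs] at hkey
    have hro : |y₂| ^ (1 - b) ≤ |y₁| ^ (1 - b) :=
      Real.rpow_le_rpow (abs_nonneg y₂) h hb1'
    rw [sq_abs, abs_of_nonpos (sub_nonpos.mpr hro)]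
    have : (ψ y₂ - ψ y₁) ^ 2 = (ψ y₁ - ψ y₂) ^ 2 := by ring
    rw [this]
    linarith [hkey]
end

section
/- Let b ∈ (−1,1). Let ψ : ℝ → ℝ be even, differentiable almost everywhere with ψ(y) = ψ(0) + ∫_0^y ψ'(t) dt for all y, with ∫_ℝ |y|^b·(ψ(y)² + ψ'(y)²) dy < ∞. Suppose moreover that the function y ↦ |y|^b·ψ'(y) coincides almost everywhere with a function F that is absolutely continuous on ℝ (F(y₂) − F(y₁) = ∫_{y₁}^{y₂} F'(t) dt for all y₁, y₂), and that the function g defined by g(y) = −|y|^{−b}·F'(y) satisfies ∫_ℝ |y|^b·g(y)² dy < ∞. Then for every even function η : ℝ → ℝ which is differentiable almost everywhere with η(y) = η(0) + ∫_0^y η'(t) dt and ∫_ℝ |y|^b·(η(y)² + η'(y)²) dy < ∞, one has ∫_ℝ |y|^b·g(y)·η(y) dy = ∫_ℝ |y|^b·ψ'(y)·η'(y) dy. -/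
open MeasureTheory Real Filter Set Topology
open scoped ENNReal

/-- Fubini over the triangle: key identity for integration by parts of primitives. -/
lemma ftc_fubini_triangle (u' v' : ℝ → ℝ) (t : ℝ)
    (hu'i : IntegrableOn u' (Ioc (0:ℝ) t)) (hv'i : IntegrableOn v' (Ioc (0:ℝ) t)) :
    (∫ s in Ioc (0:ℝ) t, u' s * ∫ r in Ioc (0:ℝ) s, v' r)
      + ∫ r in Ioc (0:ℝ) t, (∫ s in Ioc (0:ℝ) r, u' s) * v' r
    = (∫ s in Ioc (0:ℝ) t, u' s) * ∫ r in Ioc (0:ℝ) t, v' r := by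
  set μ0 := volume.restrict (Ioc (0:ℝ) t) with hμ0
  have hfull : Integrable (fun z : ℝ × ℝ => u' z.1 * v' z.2) (μ0.prod μ0) :=
    hu'i.mul_prod hv'i
  have hset1 : MeasurableSet {z : ℝ × ℝ | z.2 ≤ z.1} :=
    measurableSet_le measurable_snd measurable_fst
  have hset2 : MeasurableSet {z : ℝ × ℝ | z.1 < z.2} :=
    measurableSet_lt measurable_fst measurable_snd
  have h1 : Integrable ({z : ℝ × ℝ | z.2 ≤ z.1}.indicator fun z => u' z.1 * v' z.2)
      (μ0.prod μ0) := hfull.indicator hset1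
  have h2 : Integrable ({z : ℝ × ℝ | z.1 < z.2}.indicator fun z => u' z.1 * v' z.2)
      (μ0.prod μ0) := hfull.indicator hset2
  have hsum : (fun z : ℝ × ℝ => ({z : ℝ × ℝ | z.2 ≤ z.1}.indicator (fun z => u' z.1 * v' z.2)) z
      + ({z : ℝ × ℝ | z.1 < z.2}.indicator (fun z => u' z.1 * v' z.2)) z)
      = fun z : ℝ × ℝ => u' z.1 * v' z.2 := by
    funext z
    simp only [Set.indicator_apply, mem_setOf_eq]
    rcases le_or_gt z.2 z.1 with h | h
    · rw [if_pos h, if_neg (not_lt.2 h), add_zero]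
    · rw [if_neg (not_le.2 h), if_pos h, zero_add]
  have key : (∫ z, ({z : ℝ × ℝ | z.2 ≤ z.1}.indicator (fun z => u' z.1 * v' z.2)) z ∂μ0.prod μ0)
      + ∫ z, ({z : ℝ × ℝ | z.1 < z.2}.indicator (fun z => u' z.1 * v' z.2)) z ∂μ0.prod μ0
      = (∫ s in Ioc (0:ℝ) t, u' s) * ∫ r in Ioc (0:ℝ) t, v' r := by
    rw [← integral_add h1 h2]
    rw [show (fun z : ℝ × ℝ => ({z : ℝ × ℝ | z.2 ≤ z.1}.indicator (fun z => u' z.1 * v' z.2)) z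
      + ({z : ℝ × ℝ | z.1 < z.2}.indicator (fun z => u' z.1 * v' z.2)) z)
      = fun z : ℝ × ℝ => u' z.1 * v' z.2 from hsum]
    exact integral_prod_mul u' v'
  have E1 : (∫ z, ({z : ℝ × ℝ | z.2 ≤ z.1}.indicator (fun z => u' z.1 * v' z.2)) z ∂μ0.prod μ0)
      = ∫ s in Ioc (0:ℝ) t, u' s * ∫ r in Ioc (0:ℝ) s, v' r := by
    rw [integral_prod _ h1]
    refine setIntegral_congr_fun measurableSet_Ioc fun s hs => ?_
    have : (fun r => ({z : ℝ × ℝ | z.2 ≤ z.1}.indicator (fun z => u' z.1 * v' z.2)) (s, r))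
        = (Iic s).indicator (fun r => u' s * v' r) := by
      funext r
      simp only [Set.indicator_apply, mem_setOf_eq, mem_Iic]
    rw [this, integral_indicator measurableSet_Iic, hμ0,
      Measure.restrict_restrict measurableSet_Iic,
      show Iic s ∩ Ioc (0:ℝ) t = Ioc 0 s by
        ext r
        simp only [mem_inter_iff, mem_Iic, mem_Ioc]
        exact ⟨fun ⟨h1, h2, _⟩ => ⟨h2, h1⟩, fun ⟨h1, h2⟩ => ⟨h2, h1, h2.trans hs.2⟩⟩,
      integral_const_mul]
  have E2 : (∫ z, ({z : ℝ × ℝ | z.1 < z.2}.indicator (fun z => u' z.1 * v' z.2)) z ∂μ0.prod μ0)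
      = ∫ r in Ioc (0:ℝ) t, (∫ s in Ioc (0:ℝ) r, u' s) * v' r := by
    rw [integral_prod_symm _ h2]
    refine setIntegral_congr_fun measurableSet_Ioc fun r hr => ?_
    have : (fun s => ({z : ℝ × ℝ | z.1 < z.2}.indicator (fun z => u' z.1 * v' z.2)) (s, r))
        = (Iio r).indicator (fun s => u' s * v' r) := by
      funext s
      simp only [Set.indicator_apply, mem_setOf_eq, mem_Iio]
    rw [this, integral_indicator measurableSet_Iio, hμ0,
      Measure.restrict_restrict measurableSet_Iio,
      show Iio r ∩ Ioc (0:ℝ) t = Ioo 0 r by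
        ext s
        simp only [mem_inter_iff, mem_Iio, mem_Ioc, mem_Ioo]
        exact ⟨fun ⟨h1, h2, _⟩ => ⟨h2, h1⟩, fun ⟨h1, h2⟩ => ⟨h2, h1, h2.le.trans hr.2⟩⟩,
      integral_mul_const, ← integral_Ioc_eq_integral_Ioo]
  rw [← E1, ← E2, key]

/-- FTC for products of "absolutely continuous" functions, nonnegative endpoint case. -/
lemma ftc_mul_nonneg (u v u' v' : ℝ → ℝ)
    (hu'i : ∀ a c : ℝ, IntegrableOn u' (Ioc a c)) (hv'i : ∀ a c : ℝ, IntegrableOn v' (Ioc a c))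
    (hu : ∀ y, u y = u 0 + ∫ s in (0:ℝ)..y, u' s) (hv : ∀ y, v y = v 0 + ∫ s in (0:ℝ)..y, v' s)
    (t : ℝ) (ht : 0 ≤ t) :
    u t * v t = u 0 * v 0 + ∫ s in (0:ℝ)..t, (u' s * v s + u s * v' s) := by
  have hu'ii : ∀ a c : ℝ, IntervalIntegrable u' volume a c := fun a c =>
    intervalIntegrable_iff.2 (hu'i _ _)
  have hv'ii : ∀ a c : ℝ, IntervalIntegrable v' volume a c := fun a c =>
    intervalIntegrable_iff.2 (hv'i _ _)
  have hUcont : Continuous fun y => ∫ s in (0:ℝ)..y, u' s :=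
    intervalIntegral.continuous_primitive hu'ii 0
  have hVcont : Continuous fun y => ∫ s in (0:ℝ)..y, v' s :=
    intervalIntegral.continuous_primitive hv'ii 0
  have hucont : Continuous u := by
    have : u = fun y => u 0 + ∫ s in (0:ℝ)..y, u' s := funext hu
    rw [this]; exact continuous_const.add hUcont
  have hvcont : Continuous v := by
    have : v = fun y => v 0 + ∫ s in (0:ℝ)..y, v' s := funext hv
    rw [this]; exact continuous_const.add hVcont
  rw [intervalIntegral.integral_of_le ht]
  -- integrability pieces on Ioc 0 t
  have hI1 : IntegrableOn (fun s => u' s * v s) (Ioc (0:ℝ) t) :=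
    (hu'i 0 t).mul_continuousOn_of_subset hvcont.continuousOn measurableSet_Ioc
      isCompact_Icc Ioc_subset_Icc_self
  have hI2 : IntegrableOn (fun s => u s * v' s) (Ioc (0:ℝ) t) := by
    have := (hv'i 0 t).continuousOn_mul_of_subset hucont.continuousOn isCompact_Icc
      measurableSet_Ioc Ioc_subset_Icc_self
    exact this
  rw [integral_add hI1 hI2]
  -- rewrite each piece
  have hv' : ∀ s ∈ Ioc (0:ℝ) t, v s = v 0 + ∫ r in Ioc (0:ℝ) s, v' r := fun s hs => by
    rw [hv s, intervalIntegral.integral_of_le hs.1.le]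
  have hu' : ∀ s ∈ Ioc (0:ℝ) t, u s = u 0 + ∫ r in Ioc (0:ℝ) s, u' r := fun s hs => by
    rw [hu s, intervalIntegral.integral_of_le hs.1.le]
  have E1 : ∫ s in Ioc (0:ℝ) t, u' s * v s
      = (∫ s in Ioc (0:ℝ) t, u' s) * v 0 + ∫ s in Ioc (0:ℝ) t, u' s * ∫ r in Ioc (0:ℝ) s, v' r := by
    rw [← integral_mul_const, ← integral_add]
    · refine setIntegral_congr_fun measurableSet_Ioc fun s hs => ?_
      rw [hv' s hs]; ring
    · exact (hu'i 0 t).mul_const _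
    · -- integrable: u' s * (set primitive)
      have : (fun s => u' s * ∫ r in Ioc (0:ℝ) s, v' r) =ᵐ[volume.restrict (Ioc (0:ℝ) t)]
          fun s => u' s * ∫ r in (0:ℝ)..s, v' r := by
        filter_upwards [ae_restrict_mem measurableSet_Ioc] with s hs
        rw [intervalIntegral.integral_of_le hs.1.le]
      refine (Integrable.congr ?_ this.symm)
      exact (hu'i 0 t).mul_continuousOn_of_subset hVcont.continuousOn measurableSet_Ioc
        isCompact_Icc Ioc_subset_Icc_self
  have E2 : ∫ s in Ioc (0:ℝ) t, u s * v' s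
      = u 0 * (∫ s in Ioc (0:ℝ) t, v' s) + ∫ r in Ioc (0:ℝ) t, (∫ s in Ioc (0:ℝ) r, u' s) * v' r := by
    rw [← integral_const_mul, ← integral_add]
    · refine setIntegral_congr_fun measurableSet_Ioc fun s hs => ?_
      rw [hu' s hs]; ring
    · exact (hv'i 0 t).const_mul _
    · have : (fun r => (∫ s in Ioc (0:ℝ) r, u' s) * v' r) =ᵐ[volume.restrict (Ioc (0:ℝ) t)]
          fun r => (∫ s in (0:ℝ)..r, u' s) * v' r := by
        filter_upwards [ae_restrict_mem measurableSet_Ioc] with r hr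
        rw [intervalIntegral.integral_of_le hr.1.le]
      refine (Integrable.congr ?_ this.symm)
      exact (hv'i 0 t).continuousOn_mul_of_subset hUcont.continuousOn isCompact_Icc
        measurableSet_Ioc Ioc_subset_Icc_self
  rw [E1, E2]
  have key := ftc_fubini_triangle u' v' t (hu'i 0 t) (hv'i 0 t)
  have hut : u t = u 0 + ∫ s in Ioc (0:ℝ) t, u' s := by
    rw [hu t, intervalIntegral.integral_of_le ht]
  have hvt : v t = v 0 + ∫ s in Ioc (0:ℝ) t, v' s := by
    rw [hv t, intervalIntegral.integral_of_le ht]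
  rw [hut, hvt]
  nlinarith [key]

/-- FTC for products, general endpoint. -/
lemma ftc_mul (u v u' v' : ℝ → ℝ)
    (hu'i : ∀ a c : ℝ, IntegrableOn u' (Ioc a c)) (hv'i : ∀ a c : ℝ, IntegrableOn v' (Ioc a c))
    (hu : ∀ y, u y = u 0 + ∫ s in (0:ℝ)..y, u' s) (hv : ∀ y, v y = v 0 + ∫ s in (0:ℝ)..y, v' s)
    (t : ℝ) :
    u t * v t = u 0 * v 0 + ∫ s in (0:ℝ)..t, (u' s * v s + u s * v' s) := by
  rcases le_or_gt 0 t with ht | ht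
  · exact ftc_mul_nonneg u v u' v' hu'i hv'i hu hv t ht
  · -- reflect
    have refl_int : ∀ (w : ℝ → ℝ), (∀ a c : ℝ, IntegrableOn w (Ioc a c)) →
        ∀ a c : ℝ, IntegrableOn (fun s => -w (-s)) (Ioc a c) := by
      intro w hw a c
      have : IntervalIntegrable w volume (-a) (-c) := intervalIntegrable_iff.2 (hw _ _)
      have h2 : IntervalIntegrable (fun s => w (-s)) volume a c := by
        simpa using (IntervalIntegrable.iff_comp_neg (by simp)).1 this
      have h3 : IntervalIntegrable (fun s => -w (-s)) volume a c := h2.neg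
      have := intervalIntegrable_iff.1 h3
      exact this.mono_set Ioc_subset_uIoc
    have refl_ftc : ∀ (w w' : ℝ → ℝ), (∀ a c : ℝ, IntegrableOn w' (Ioc a c)) →
        (∀ y, w y = w 0 + ∫ s in (0:ℝ)..y, w' s) →
        ∀ y, w (-y) = w 0 + ∫ s in (0:ℝ)..y, -w' (-s) := by
      intro w w' _ hw y
      rw [hw (-y)]
      congr 1
      rw [intervalIntegral.integral_neg]
      have : (∫ s in (0:ℝ)..y, w' (-s)) = ∫ s in -y..(0:ℝ), w' s := by
        simpa using intervalIntegral.integral_comp_neg (a := (0:ℝ)) (b := y) (f := w')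
      rw [this]
      exact intervalIntegral.integral_symm _ _
    have hres := ftc_mul_nonneg (fun y => u (-y)) (fun y => v (-y))
      (fun s => -u' (-s)) (fun s => -v' (-s))
      (refl_int u' hu'i) (refl_int v' hv'i)
      (by intro y; simpa using refl_ftc u u' hu'i hu y)
      (by intro y; simpa using refl_ftc v v' hv'i hv y)
      (-t) (by linarith)
    simp only [neg_neg, neg_zero] at hres
    rw [hres]
    congr 1
    -- ∫ s in 0..-t, (-u'(-s) * v(-s) + u(-s) * -v'(-s)) = ∫ s in 0..t, (u' v + u v')
    have h1 : (∫ s in (0:ℝ)..(-t), (-u' (-s) * v (-s) + u (-s) * -v' (-s)))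
        = -∫ s in (0:ℝ)..(-t), (fun y => u' y * v y + u y * v' y) (-s) := by
      rw [← intervalIntegral.integral_neg]
      congr 1
      funext s
      simp only
      ring
    rw [h1]
    have h2 : (∫ s in (0:ℝ)..(-t), (fun y => u' y * v y + u y * v' y) (-s))
        = ∫ s in t..(0:ℝ), (u' s * v s + u s * v' s) := by
      simpa using intervalIntegral.integral_comp_neg (a := (0:ℝ)) (b := -t)
        (f := fun y => u' y * v y + u y * v' y)
    rw [h2]
    rw [intervalIntegral.integral_symm, neg_neg]

/-- L² × L² → L¹. -/
lemma mulL2 {μ : Measure ℝ} (f h : ℝ → ℝ) (hf : MemLp f 2 μ) (hh : MemLp h 2 μ) :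
    Integrable (fun y => f y * h y) μ := by
  rw [← memLp_one_iff_integrable]
  have h3 : MemLp (h • f) 1 μ := hf.smul hh
  have : (fun y => f y * h y) = h • f := funext fun y => mul_comm (f y) (h y)
  rw [this]
  exact h3

/-- local integrability of the weights. -/
lemma weight_intervalIntegrable {p : ℝ} (hp : -1 < p) (a c : ℝ) :
    IntervalIntegrable (fun y : ℝ => |y| ^ p) volume a c := by
  have base : ∀ c : ℝ, 0 ≤ c → IntervalIntegrable (fun y : ℝ => |y| ^ p) volume 0 c := by
    intro c hc
    rw [intervalIntegrable_iff]
    refine Integrable.congr (intervalIntegrable_iff.1 (intervalIntegral.intervalIntegrable_rpow' hp (a := 0) (b := c))) ?_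
    rw [uIoc_of_le hc]
    filter_upwards [ae_restrict_mem measurableSet_Ioc] with y hy
    rw [abs_of_pos hy.1]
  have all0 : ∀ c : ℝ, IntervalIntegrable (fun y : ℝ => |y| ^ p) volume 0 c := by
    intro c
    rcases le_or_gt 0 c with hc | hc
    · exact base c hc
    · have h2 := (IntervalIntegrable.iff_comp_neg (by simp)).1 (base (-c) (by linarith))
      simpa using h2
  exact (all0 a).symm.trans (all0 c)

lemma measurable_abs_rpow (c : ℝ) : Measurable fun y : ℝ => |y| ^ c := by
  measurability



/-- integration by parts for the weak weighted operator
`D_b ψ = −|y|^{−b}·(|y|^b·ψ')'`. If `ψ` is even, absolutely continuous, with finite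
weighted energy, if `|y|^b·ψ'` agrees a.e. with an absolutely continuous `F`, and if
`g(y) = −|y|^{−b}·F'(y)` has `∫ |y|^b·g² < ∞`, then for every even admissible `η`,
`∫ |y|^b·g·η = ∫ |y|^b·ψ'·η'`. -/
theorem weighted_integration_by_parts (b : ℝ) (hb0 : -1 < b) (hb1 : b < 1)
    (ψ F g : ℝ → ℝ)
    (hψσ : ∀ y : ℝ, ψ (-y) = ψ y)
    (hψd : ∀ᵐ y : ℝ ∂volume, DifferentiableAt ℝ ψ y)
    (hψftc : ∀ y : ℝ, ψ y = ψ 0 + ∫ t in (0 : ℝ)..y, deriv ψ t)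
    (hψint : Integrable (fun y : ℝ => |y| ^ b * ((ψ y) ^ 2 + (deriv ψ y) ^ 2)))
    (hF : ∀ᵐ y : ℝ ∂volume, |y| ^ b * deriv ψ y = F y)
    (hFd : ∀ᵐ y : ℝ ∂volume, DifferentiableAt ℝ F y)
    (hFftc : ∀ y₁ y₂ : ℝ, F y₂ - F y₁ = ∫ t in y₁..y₂, deriv F t)
    (hg : ∀ y : ℝ, g y = -(|y| ^ (-b) * deriv F y))
    (hgint : Integrable (fun y : ℝ => |y| ^ b * (g y) ^ 2)) :
    ∀ η : ℝ → ℝ,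
      (∀ y : ℝ, η (-y) = η y) →
      (∀ᵐ y : ℝ ∂volume, DifferentiableAt ℝ η y) →
      (∀ y : ℝ, η y = η 0 + ∫ t in (0 : ℝ)..y, deriv η t) →
      Integrable (fun y : ℝ => |y| ^ b * ((η y) ^ 2 + (deriv η y) ^ 2)) →
      ∫ y : ℝ, |y| ^ b * g y * η y = ∫ y : ℝ, |y| ^ b * deriv ψ y * deriv η y := by
  intro η hησ hηd hηftc hηint
  -- basic measurability
  have mF' : Measurable (deriv F) := measurable_deriv F
  have mη' : Measurable (deriv η) := measurable_deriv η
  have mψ' : Measurable (deriv ψ) := measurable_deriv ψ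
  have mg : Measurable g := by
    have : g = fun y => -(|y| ^ (-b) * deriv F y) := funext hg
    rw [this]
    exact ((measurable_abs_rpow (-b)).mul mF').neg
  -- a.e. nonzero
  have h0 : ∀ᵐ y : ℝ ∂volume, y ≠ (0:ℝ) := by
    refine ae_iff.2 ?_
    simpa [not_not, setOf_eq_eq_singleton] using measure_singleton (0:ℝ)
  -- the square-root weight
  have sqW : ∀ y : ℝ, (|y| ^ (b/2)) ^ 2 = |y| ^ b := by
    intro y
    rw [← Real.rpow_natCast (|y| ^ (b/2)) 2, ← Real.rpow_mul (abs_nonneg y)]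
    norm_num
  have sqW' : ∀ y : ℝ, |y| ^ (b/2) * |y| ^ (b/2) = |y| ^ b := by
    intro y; rw [← sq]; exact sqW y
  have mW : Measurable fun y : ℝ => |y| ^ (b/2) := measurable_abs_rpow _
  -- Memℒp facts
  have memL2 : ∀ h : ℝ → ℝ, Measurable h → Integrable (fun y => |y| ^ b * h y ^ 2) →
      MemLp (fun y => |y| ^ (b/2) * h y) 2 volume := by
    intro h mh hint
    refine (memLp_two_iff_integrable_sq ((mW.mul mh).aestronglyMeasurable)).2 ?_
    have : (fun y => (|y| ^ (b/2) * h y) ^ 2) = fun y => |y| ^ b * h y ^ 2 := by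
      funext y; rw [mul_pow, sqW]
    show Integrable (fun y => (|y| ^ (b/2) * h y) ^ 2) volume
    rw [this]
    exact hint
  -- extract the pieces of the energy integrals
  have hsplit : ∀ f f2 : ℝ → ℝ, Measurable f →
      Integrable (fun y : ℝ => |y| ^ b * ((f y) ^ 2 + (f2 y) ^ 2)) →
      Integrable (fun y : ℝ => |y| ^ b * (f y) ^ 2) := by
    intro f f2 mf hint
    have mWb : Measurable fun y : ℝ => |y| ^ b := measurable_abs_rpow _
    refine hint.mono' ((mWb.mul (mf.pow measurable_const)).aestronglyMeasurable) ?_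
    · filter_upwards with y
      have h1 : (0:ℝ) ≤ |y| ^ b := Real.rpow_nonneg (abs_nonneg y) b
      have h2 : (0:ℝ) ≤ f y ^ 2 := sq_nonneg _
      have h3 : (0:ℝ) ≤ f2 y ^ 2 := sq_nonneg _
      rw [Real.norm_eq_abs, abs_of_nonneg (mul_nonneg h1 h2)]
      nlinarith
  -- commuted energy integrals
  have hψint' : Integrable (fun y : ℝ => |y| ^ b * ((deriv ψ y) ^ 2 + (ψ y) ^ 2)) :=
    hψint.congr (Eventually.of_forall fun y => by ring)
  have hηint' : Integrable (fun y : ℝ => |y| ^ b * ((deriv η y) ^ 2 + (η y) ^ 2)) :=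
    hηint.congr (Eventually.of_forall fun y => by ring)
  have hψ'2 := hsplit (deriv ψ) ψ mψ' hψint'
  have hη'2 := hsplit (deriv η) η mη' hηint'
  -- Memℒp facts
  have Pψ' : MemLp (fun y => |y| ^ (b/2) * deriv ψ y) 2 volume := memL2 _ mψ' hψ'2
  have Pg : MemLp (fun y => |y| ^ (b/2) * g y) 2 volume := memL2 _ mg hgint
  have Pη' : MemLp (fun y => |y| ^ (b/2) * deriv η y) 2 volume := memL2 _ mη' hη'2
  -- local integrability of the weights
  have wIoc : ∀ p : ℝ, -1 < p → ∀ a c : ℝ, IntegrableOn (fun y : ℝ => |y| ^ p) (Ioc a c) :=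
    fun p hp a c => (weight_intervalIntegrable hp a c).1
  -- local integrability of deriv η
  have hη'loc : ∀ a c : ℝ, IntegrableOn (deriv η) (Ioc a c) := by
    intro a c
    have hW : MemLp (fun y : ℝ => |y| ^ (-(b/2))) 2 (volume.restrict (Ioc a c)) := by
      refine (memLp_two_iff_integrable_sq (measurable_abs_rpow _).aestronglyMeasurable).2 ?_
      have : (fun y : ℝ => (|y| ^ (-(b/2))) ^ 2) = fun y : ℝ => |y| ^ (-b) := by
        funext y
        rw [← Real.rpow_natCast (|y| ^ (-(b/2))) 2, ← Real.rpow_mul (abs_nonneg y)]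
        norm_num
      rw [this]
      exact wIoc (-b) (by linarith) a c
    have hint := mulL2 _ _ hW (Pη'.restrict _)
    refine hint.congr (ae_restrict_of_ae ?_)
    filter_upwards [h0] with y hy
    rw [← mul_assoc, ← Real.rpow_add (abs_pos.2 hy)]
    norm_num
  -- deriv F agrees a.e. with -(|y|^b * g y)
  have hderivF_ae : deriv F =ᵐ[volume] fun y => -(|y| ^ b * g y) := by
    filter_upwards [h0] with y hy
    have hne : |y| ^ b ≠ 0 := (Real.rpow_pos_of_pos (abs_pos.2 hy) b).ne'
    rw [hg y, Real.rpow_neg (abs_nonneg y)]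
    field_simp
  -- local integrability of deriv F
  have hF'loc : ∀ a c : ℝ, IntegrableOn (deriv F) (Ioc a c) := by
    intro a c
    have hW : MemLp (fun y : ℝ => |y| ^ (b/2)) 2 (volume.restrict (Ioc a c)) := by
      refine (memLp_two_iff_integrable_sq (measurable_abs_rpow _).aestronglyMeasurable).2 ?_
      have : (fun y : ℝ => (|y| ^ (b/2)) ^ 2) = fun y : ℝ => |y| ^ b := funext sqW
      rw [this]
      exact wIoc b hb0 a c
    have hint := (mulL2 _ _ hW (Pg.restrict _)).neg
    refine hint.congr (ae_restrict_of_ae ?_)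
    filter_upwards [hderivF_ae] with y hy
    simp only [Pi.neg_apply]
    rw [hy]
    linear_combination (-(g y)) * sqW' y
  -- FTC for F with basepoint 0
  have hFftc0 : ∀ y : ℝ, F y = F 0 + ∫ t in (0:ℝ)..y, deriv F t := fun y => by
    have := hFftc 0 y; linarith
  -- continuity and measurability of η
  have hηcont : Continuous η := by
    rw [show η = fun y => η 0 + ∫ t in (0:ℝ)..y, deriv η t from funext hηftc]
    exact continuous_const.add
      (intervalIntegral.continuous_primitive (fun a c => ⟨hη'loc _ _, hη'loc _ _⟩) 0)
  have mη : Measurable η := hηcont.measurable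
  have hη2 := hsplit η (deriv η) mη hηint
  have Pη : MemLp (fun y => |y| ^ (b/2) * η y) 2 volume := memL2 _ mη hη2
  -- the product FTC
  have hG := ftc_mul F η (deriv F) (deriv η) hF'loc hη'loc hFftc0 hηftc
  -- global integrability
  have I1 : Integrable (fun y => deriv F y * η y) volume := by
    refine ((mulL2 _ _ Pg Pη).neg).congr ?_
    filter_upwards [hderivF_ae] with y hy
    simp only [Pi.neg_apply]
    rw [hy]
    linear_combination (-(g y * η y)) * sqW' y
  have I2 : Integrable (fun y => F y * deriv η y) volume := by
    refine (mulL2 _ _ Pψ' Pη').congr ?_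
    filter_upwards [hF] with y hy
    linear_combination (deriv ψ y * deriv η y) * sqW' y + deriv η y * hy
  have Ih : Integrable (fun y => deriv F y * η y + F y * deriv η y) volume := I1.add I2
  have Gint : Integrable (fun y => F y * η y) volume := by
    refine (mulL2 _ _ Pψ' Pη).congr ?_
    filter_upwards [hF] with y hy
    linear_combination (deriv ψ y * η y) * sqW' y + η y * hy
  -- limits at ±∞
  have Ttop : Tendsto (fun t => F t * η t) atTop
      (𝓝 (F 0 * η 0 + ∫ s in Ioi (0:ℝ), (deriv F s * η s + F s * deriv η s))) := by
    have h1 := intervalIntegral_tendsto_integral_Ioi (0:ℝ) Ih.integrableOn tendsto_id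
    exact (tendsto_const_nhds.add h1).congr fun t => (hG t).symm
  have Tbot : Tendsto (fun t => F t * η t) atBot
      (𝓝 (F 0 * η 0 - ∫ s in Iic (0:ℝ), (deriv F s * η s + F s * deriv η s))) := by
    have h1 := intervalIntegral_tendsto_integral_Iic (0:ℝ) Ih.integrableOn tendsto_id
    refine (tendsto_const_nhds.sub h1).congr fun t => ?_
    simp only [id_eq]
    rw [hG t, intervalIntegral.integral_symm t 0]
    ring
  have hatTop : ∀ s ∈ (atTop : Filter ℝ), volume s = ∞ := by
    intro s hs
    rcases mem_atTop_sets.1 hs with ⟨a, ha⟩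
    have hsub : Ici a ⊆ s := fun x hx => ha x hx
    exact top_le_iff.1 (le_trans (le_of_eq Real.volume_Ici.symm) (measure_mono hsub))
  have hatBot : ∀ s ∈ (atBot : Filter ℝ), volume s = ∞ := by
    intro s hs
    rcases mem_atBot_sets.1 hs with ⟨a, ha⟩
    have hsub : Iic a ⊆ s := fun x hx => ha x hx
    exact top_le_iff.1 (le_trans (le_of_eq Real.volume_Iic.symm) (measure_mono hsub))
  have Ztop : F 0 * η 0 + ∫ s in Ioi (0:ℝ), (deriv F s * η s + F s * deriv η s) = 0 :=
    IntegrableAtFilter.eq_zero_of_tendsto ⟨univ, univ_mem, Gint.integrableOn⟩ hatTop Ttop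
  have Zbot : F 0 * η 0 - ∫ s in Iic (0:ℝ), (deriv F s * η s + F s * deriv η s) = 0 :=
    IntegrableAtFilter.eq_zero_of_tendsto ⟨univ, univ_mem, Gint.integrableOn⟩ hatBot Tbot
  have Itotal : ∫ y : ℝ, (deriv F y * η y + F y * deriv η y) = 0 := by
    rw [← integral_add_compl (measurableSet_Iic (a := (0:ℝ))) Ih, compl_Iic]
    linarith
  have Isplit : (∫ y : ℝ, deriv F y * η y) + ∫ y : ℝ, F y * deriv η y = 0 := by
    rw [← integral_add I1 I2]
    exact Itotal
  calc ∫ y : ℝ, |y| ^ b * g y * η y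
      = ∫ y : ℝ, -(deriv F y * η y) := by
        refine integral_congr_ae ?_
        filter_upwards [hderivF_ae] with y hy
        rw [hy]; ring
    _ = -∫ y : ℝ, deriv F y * η y := integral_neg _
    _ = ∫ y : ℝ, F y * deriv η y := by linarith
    _ = ∫ y : ℝ, |y| ^ b * deriv ψ y * deriv η y := by
        refine integral_congr_ae ?_
        filter_upwards [hF] with y hy
        rw [← hy]
end

section
/- Let b ∈ (−1,1) and λ > 0. Let ψ : ℝ → ℝ be even, differentiable almost everywhere with ψ(y) = ψ(0) + ∫_0^y ψ'(t) dt for all y, with ∫_ℝ |y|^b·(ψ(y)² + ψ'(y)²) dy < ∞. Suppose the function y ↦ |y|^b·ψ'(y) coincides almost everywhere with an absolutely continuous function F on ℝ, and that g(y) = −|y|^{−b}·F'(y) satisfies ∫_ℝ |y|^b·g(y)² dy < ∞. Then ∫_ℝ |y|^b·( g(y) + λ·ψ(y) )² dy ≥ λ·∫_ℝ |y|^b·( ψ'(y)² + λ·ψ(y)² ) dy. -/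
set_option maxRecDepth 8000
open MeasureTheory Real Filter Set Topology

lemma aux_meas_rpow (r : ℝ) : Measurable fun y : ℝ => |y| ^ r := by measurability

lemma aux_abs_rpow_II {r : ℝ} (h : -1 < r) (a b : ℝ) :
    IntervalIntegrable (fun x : ℝ => |x| ^ r) volume a b := by
  have key : ∀ c : ℝ, 0 ≤ c → IntervalIntegrable (fun x : ℝ => |x| ^ r) volume 0 c := by
    intro c hc
    have h0 : IntervalIntegrable (fun x : ℝ => x ^ r) volume 0 c :=
      intervalIntegral.intervalIntegrable_rpow' h
    rw [intervalIntegrable_iff, uIoc_of_le hc] at h0 ⊢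
    refine h0.congr_fun (fun x hx => ?_) measurableSet_Ioc
    rw [abs_of_pos hx.1]
  have key2 : ∀ c : ℝ, IntervalIntegrable (fun x : ℝ => |x| ^ r) volume 0 c := by
    intro c
    rcases le_total 0 c with hc | hc
    · exact key c hc
    · have h1 := key (-c) (by linarith)
      have h2 := (IntervalIntegrable.iff_comp_neg (by simp)).mp h1
      simp only [abs_neg, neg_zero] at h2
      rw [neg_neg] at h2; exact h2
  exact ((key2 a).symm).trans (key2 b)

lemma aux_square_split {f p : ℝ → ℝ} {a b : ℝ}
    (hf : IntegrableOn f (Ioc a b)) (hp : IntegrableOn p (Ioc a b)) :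
    (∫ s in Ioc a b, f s * ∫ t in Ioc a s, p t)
      + (∫ t in Ioc a b, p t * ∫ s in Ioc a t, f s)
      = (∫ s in Ioc a b, f s) * (∫ t in Ioc a b, p t) := by
  set μ := volume.restrict (Ioc a b) with hμ
  have hprod : Integrable (fun z : ℝ × ℝ => f z.1 * p z.2) (μ.prod μ) :=
    Integrable.mul_prod hf hp
  have hS : MeasurableSet {z : ℝ × ℝ | z.2 ≤ z.1} :=
    measurableSet_le measurable_snd measurable_fst
  set h : ℝ × ℝ → ℝ := fun z => f z.1 * p z.2 with hh
  have h1int : Integrable ({z : ℝ × ℝ | z.2 ≤ z.1}.indicator h) (μ.prod μ) :=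
    hprod.indicator hS
  have h2int : Integrable ({z : ℝ × ℝ | z.2 ≤ z.1}ᶜ.indicator h) (μ.prod μ) :=
    hprod.indicator hS.compl
  -- total integral
  have htot : ∫ z, h z ∂(μ.prod μ) = (∫ s in Ioc a b, f s) * (∫ t in Ioc a b, p t) :=
    integral_prod_mul f p
  -- split
  have hsplit : ∫ z, h z ∂(μ.prod μ)
      = (∫ z, {z : ℝ × ℝ | z.2 ≤ z.1}.indicator h z ∂(μ.prod μ))
        + ∫ z, {z : ℝ × ℝ | z.2 ≤ z.1}ᶜ.indicator h z ∂(μ.prod μ) := by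
    rw [← integral_add h1int h2int]
    congr 1
    funext z
    simp [Set.indicator_self_add_compl_apply]
  -- first piece
  have hP1 : (∫ z, {z : ℝ × ℝ | z.2 ≤ z.1}.indicator h z ∂(μ.prod μ))
      = ∫ s in Ioc a b, f s * ∫ t in Ioc a s, p t := by
    rw [integral_prod _ h1int]
    refine setIntegral_congr_fun measurableSet_Ioc (fun s hs => ?_)
    have : ∀ t : ℝ, {z : ℝ × ℝ | z.2 ≤ z.1}.indicator h (s, t)
        = f s * (Iic s).indicator p t := by
      intro t
      by_cases ht : t ≤ s
      · rw [Set.indicator_of_mem (by exact ht), Set.indicator_of_mem (by exact ht)]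
      · rw [Set.indicator_of_notMem (by exact ht), Set.indicator_of_notMem (by exact ht),
          mul_zero]
    simp_rw [this]
    rw [integral_const_mul]
    congr 1
    rw [integral_indicator measurableSet_Iic, hμ,
      Measure.restrict_restrict measurableSet_Iic]
    have hset : Iic s ∩ Ioc a b = Ioc a s := by
      ext t
      simp only [mem_inter_iff, mem_Iic, mem_Ioc]
      exact ⟨fun ⟨h1, h2, _⟩ => ⟨h2, h1⟩, fun ⟨h1, h2⟩ => ⟨h2, h1, h2.trans hs.2⟩⟩
    rw [hset]
  -- second piece
  have hP2 : (∫ z, {z : ℝ × ℝ | z.2 ≤ z.1}ᶜ.indicator h z ∂(μ.prod μ))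
      = ∫ t in Ioc a b, p t * ∫ s in Ioc a t, f s := by
    rw [integral_prod_symm _ h2int]
    refine setIntegral_congr_fun measurableSet_Ioc (fun t ht => ?_)
    have : ∀ s : ℝ, {z : ℝ × ℝ | z.2 ≤ z.1}ᶜ.indicator h (s, t)
        = p t * (Iio t).indicator f s := by
      intro s
      by_cases hst : t ≤ s
      · rw [Set.indicator_of_notMem (by simpa using hst),
          Set.indicator_of_notMem (by simpa using hst), mul_zero]
      · rw [Set.indicator_of_mem (by simpa using hst),
          Set.indicator_of_mem (by exact lt_of_not_ge hst)]
        ring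
    simp_rw [this]
    rw [integral_const_mul]
    congr 1
    rw [integral_indicator measurableSet_Iio, hμ,
      Measure.restrict_restrict measurableSet_Iio]
    have hset : Iio t ∩ Ioc a b = Ioo a t := by
      ext s
      simp only [mem_inter_iff, mem_Iio, mem_Ioc, mem_Ioo]
      exact ⟨fun ⟨h1, h2, _⟩ => ⟨h2, h1⟩, fun ⟨h1, h2⟩ => ⟨h2, h1, h2.le.trans ht.2⟩⟩
    rw [hset, ← integral_Ioc_eq_integral_Ioo]
  rw [← htot, hsplit, hP1, hP2]

lemma aux_ftc_mul {F ψ f p : ℝ → ℝ}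
    (hFftc : ∀ y₁ y₂ : ℝ, F y₂ - F y₁ = ∫ t in y₁..y₂, f t)
    (hψftc : ∀ y₁ y₂ : ℝ, ψ y₂ - ψ y₁ = ∫ t in y₁..y₂, p t)
    (hfi : ∀ a b : ℝ, IntervalIntegrable f volume a b)
    (hpi : ∀ a b : ℝ, IntervalIntegrable p volume a b)
    {a b : ℝ} (hab : a ≤ b) :
    ∫ t in a..b, (f t * ψ t + F t * p t) = F b * ψ b - F a * ψ a := by
  set Pf : ℝ → ℝ := fun s => ∫ u in a..s, f u with hPf
  set Pp : ℝ → ℝ := fun s => ∫ u in a..s, p u with hPp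
  have hPfc : Continuous Pf := intervalIntegral.continuous_primitive hfi a
  have hPpc : Continuous Pp := intervalIntegral.continuous_primitive hpi a
  have hfI : IntegrableOn f (Ioc a b) :=
    (intervalIntegrable_iff_integrableOn_Ioc_of_le hab).mp (hfi a b)
  have hpI : IntegrableOn p (Ioc a b) :=
    (intervalIntegrable_iff_integrableOn_Ioc_of_le hab).mp (hpi a b)
  have e1 : ∫ t in Ioc a b, f t = F b - F a := by
    rw [← intervalIntegral.integral_of_le hab, ← hFftc]
  have e2 : ∫ t in Ioc a b, p t = ψ b - ψ a := by
    rw [← intervalIntegral.integral_of_le hab, ← hψftc]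
  -- integrabilities
  have I1 : IntegrableOn (fun t => f t * ψ a) (Ioc a b) := hfI.mul_const _
  have I2 : IntegrableOn (fun t => f t * Pp t) (Ioc a b) :=
    (intervalIntegrable_iff_integrableOn_Ioc_of_le hab).mp
      ((hfi a b).mul_continuousOn hPpc.continuousOn)
  have I3 : IntegrableOn (fun t => F a * p t) (Ioc a b) := hpI.const_mul _
  have I4 : IntegrableOn (fun t => Pf t * p t) (Ioc a b) :=
    (intervalIntegrable_iff_integrableOn_Ioc_of_le hab).mp
      ((hpi a b).continuousOn_mul hPfc.continuousOn)
  have key : ∫ t in Ioc a b, (f t * ψ t + F t * p t)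
      = (∫ t in Ioc a b, f t * ψ a) + ((∫ t in Ioc a b, f t * Pp t)
        + ((∫ t in Ioc a b, F a * p t) + ∫ t in Ioc a b, Pf t * p t)) := by
    have hcg : ∫ t in Ioc a b, (f t * ψ t + F t * p t)
        = ∫ t in Ioc a b, (f t * ψ a + (f t * Pp t + (F a * p t + Pf t * p t))) := by
      refine setIntegral_congr_fun measurableSet_Ioc (fun t ht => ?_)
      have hψt : ψ t = ψ a + Pp t := by
        have := hψftc a t; simp only [hPp]; linarith
      have hFt : F t = F a + Pf t := by
        have := hFftc a t; simp only [hPf]; linarith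
      rw [hψt, hFt]; ring
    have I34 : IntegrableOn (fun t => F a * p t + Pf t * p t) (Ioc a b) := I3.add I4
    have I234 : IntegrableOn (fun t => f t * Pp t + (F a * p t + Pf t * p t)) (Ioc a b) :=
      I2.add I34
    rw [hcg, integral_add I1 I234, integral_add I2 I34, integral_add I3 I4]
  have sq : (∫ t in Ioc a b, f t * Pp t) + (∫ t in Ioc a b, Pf t * p t)
      = (F b - F a) * (ψ b - ψ a) := by
    rw [← e1, ← e2, ← aux_square_split hfI hpI]
    congr 1
    · refine setIntegral_congr_fun measurableSet_Ioc (fun s hs => ?_)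
      show f s * (∫ u in a..s, p u) = f s * ∫ t in Ioc a s, p t
      rw [intervalIntegral.integral_of_le hs.1.le]
    · refine setIntegral_congr_fun measurableSet_Ioc (fun t ht => ?_)
      show (∫ u in a..t, f u) * p t = p t * ∫ s in Ioc a t, f s
      rw [intervalIntegral.integral_of_le ht.1.le, mul_comm]
  rw [intervalIntegral.integral_of_le hab, key]
  rw [integral_mul_const, integral_const_mul, e1, e2]
  nlinarith [sq]

/-- for `b ∈ (−1,1)`, `λ > 0` and `ψ` even, absolutely continuous, with
finite weighted energy, such that `|y|^b·ψ'` agrees a.e. with an absolutely continuous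
`F` and `g(y) = −|y|^{−b}·F'(y)` satisfies `∫ |y|^b·g² < ∞`, one has
`∫ |y|^b·(g + λψ)² ≥ λ·∫ |y|^b·(ψ'² + λψ²)`. -/
theorem weighted_second_order_lower_bound (b : ℝ) (hb0 : -1 < b) (hb1 : b < 1)
    (lam : ℝ) (hlam : 0 < lam)
    (ψ F g : ℝ → ℝ)
    (hψσ : ∀ y : ℝ, ψ (-y) = ψ y)
    (hψd : ∀ᵐ y : ℝ ∂volume, DifferentiableAt ℝ ψ y)
    (hψftc : ∀ y : ℝ, ψ y = ψ 0 + ∫ t in (0 : ℝ)..y, deriv ψ t)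
    (hψint : Integrable (fun y : ℝ => |y| ^ b * ((ψ y) ^ 2 + (deriv ψ y) ^ 2)))
    (hF : ∀ᵐ y : ℝ ∂volume, |y| ^ b * deriv ψ y = F y)
    (hFd : ∀ᵐ y : ℝ ∂volume, DifferentiableAt ℝ F y)
    (hFftc : ∀ y₁ y₂ : ℝ, F y₂ - F y₁ = ∫ t in y₁..y₂, deriv F t)
    (hg : ∀ y : ℝ, g y = -(|y| ^ (-b) * deriv F y))
    (hgint : Integrable (fun y : ℝ => |y| ^ b * (g y) ^ 2)) :
    lam * ∫ y : ℝ, |y| ^ b * ((deriv ψ y) ^ 2 + lam * (ψ y) ^ 2)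
      ≤ ∫ y : ℝ, |y| ^ b * (g y + lam * ψ y) ^ 2 := by
  have h0 : ∀ᵐ y : ℝ ∂volume, y ≠ 0 := by
    rw [ae_iff]
    simp only [not_not, setOf_eq_eq_singleton]
    exact measure_singleton 0
  have hwnn : ∀ y : ℝ, 0 ≤ |y| ^ b := fun y => rpow_nonneg (abs_nonneg y) b
  have mw : Measurable fun y : ℝ => |y| ^ b := aux_meas_rpow b
  have mwn : Measurable fun y : ℝ => |y| ^ (-b) := aux_meas_rpow (-b)
  have mp : Measurable (deriv ψ) := measurable_deriv ψ
  have mf : Measurable (deriv F) := measurable_deriv F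
  have mg : Measurable g := by
    have : g = fun y => -(|y| ^ (-b) * deriv F y) := funext hg
    rw [this]; exact (mwn.mul mf).neg
  -- integrability of the pieces of hψint
  have Iwp2 : Integrable (fun y : ℝ => |y| ^ b * (deriv ψ y) ^ 2) := by
    refine hψint.mono' ((mw.mul (mp.pow_const 2)).aestronglyMeasurable) (ae_of_all _ fun y => ?_)
    have h1 : 0 ≤ |y| ^ b * (deriv ψ y) ^ 2 := mul_nonneg (hwnn y) (sq_nonneg _)
    rw [Real.norm_eq_abs, abs_of_nonneg h1]
    nlinarith [hwnn y, sq_nonneg (ψ y)]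
  -- a.e. identity for deriv F
  have hfae : ∀ᵐ y : ℝ ∂volume, deriv F y = -(|y| ^ b * g y) := by
    filter_upwards [h0] with y hy
    have hw1 : |y| ^ b * |y| ^ (-b) = 1 := by
      rw [← rpow_add (abs_pos.mpr hy)]; simp
    have := hg y
    have h2 : |y| ^ b * g y = -(deriv F y) := by
      rw [this, mul_neg, ← mul_assoc, hw1, one_mul]
    linarith [h2]
  -- interval integrability of deriv ψ
  have hpi : ∀ a b' : ℝ, IntervalIntegrable (deriv ψ) volume a b' := by
    intro a b'
    rw [intervalIntegrable_iff]
    have hBi : IntegrableOn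
        (fun y : ℝ => (|y| ^ b * (deriv ψ y) ^ 2 + |y| ^ (-b)) / 2) (uIoc a b') volume := by
      have h1 := Iwp2.integrableOn (s := uIoc a b')
      have h2 : IntegrableOn (fun y : ℝ => |y| ^ (-b)) (uIoc a b') volume := by
        have := aux_abs_rpow_II (r := -b) (by linarith) a b'
        rwa [intervalIntegrable_iff] at this
      exact (h1.add h2).div_const 2
    refine Integrable.mono' hBi mp.aestronglyMeasurable (ae_restrict_of_ae ?_)
    filter_upwards [h0] with y hy
    have hu : 0 < |y| ^ (b / 2) := rpow_pos_of_pos (abs_pos.mpr hy) _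
    have h1 : |y| ^ (b / 2) * |y| ^ (b / 2) = |y| ^ b := by
      rw [← rpow_add (abs_pos.mpr hy)]; ring_nf
    have h2 : |y| ^ (-b) = (|y| ^ (b / 2))⁻¹ * (|y| ^ (b / 2))⁻¹ := by
      rw [← mul_inv, h1, ← rpow_neg (abs_nonneg y)]
    rw [Real.norm_eq_abs]
    nlinarith [sq_nonneg (|y| ^ (b / 2) * |deriv ψ y| - (|y| ^ (b / 2))⁻¹),
      mul_inv_cancel₀ hu.ne', abs_nonneg (deriv ψ y), sq_abs (deriv ψ y), hu]
  -- interval integrability of deriv F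
  have hfi : ∀ a b' : ℝ, IntervalIntegrable (deriv F) volume a b' := by
    intro a b'
    rw [intervalIntegrable_iff]
    have hBi : IntegrableOn
        (fun y : ℝ => (|y| ^ b * (g y) ^ 2 + |y| ^ b) / 2) (uIoc a b') volume := by
      have h1 := hgint.integrableOn (s := uIoc a b')
      have h2 : IntegrableOn (fun y : ℝ => |y| ^ b) (uIoc a b') volume := by
        have := aux_abs_rpow_II (r := b) hb0 a b'
        rwa [intervalIntegrable_iff] at this
      exact (h1.add h2).div_const 2
    refine Integrable.mono' hBi mf.aestronglyMeasurable (ae_restrict_of_ae ?_)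
    filter_upwards [hfae] with y hy
    rw [Real.norm_eq_abs, hy, abs_neg, abs_mul, abs_of_nonneg (hwnn y)]
    nlinarith [hwnn y, sq_nonneg (|g y| - 1), sq_abs (g y), abs_nonneg (g y)]
  -- continuity
  have ψcont : Continuous ψ := by
    have : ψ = fun y => ψ 0 + ∫ t in (0 : ℝ)..y, deriv ψ t := funext hψftc
    rw [this]
    exact continuous_const.add (intervalIntegral.continuous_primitive hpi 0)
  have Fcont : Continuous F := by
    have : F = fun y => F 0 + ∫ t in (0 : ℝ)..y, deriv F t := by
      funext y; have := hFftc 0 y; linarith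
    rw [this]
    exact continuous_const.add (intervalIntegral.continuous_primitive hfi 0)
  have mψ : Measurable ψ := ψcont.measurable
  have Iwψ2 : Integrable (fun y : ℝ => |y| ^ b * (ψ y) ^ 2) := by
    refine hψint.mono' ((mw.mul (mψ.pow_const 2)).aestronglyMeasurable) (ae_of_all _ fun y => ?_)
    have h1 : 0 ≤ |y| ^ b * (ψ y) ^ 2 := mul_nonneg (hwnn y) (sq_nonneg _)
    rw [Real.norm_eq_abs, abs_of_nonneg h1]
    nlinarith [hwnn y, sq_nonneg (deriv ψ y)]
  have Iwgψ : Integrable (fun y : ℝ => |y| ^ b * (g y * ψ y)) := by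
    refine ((hgint.add Iwψ2).div_const 2).mono'
      ((mw.mul (mg.mul mψ)).aestronglyMeasurable) (ae_of_all _ fun y => ?_)
    rw [Real.norm_eq_abs, abs_mul, abs_of_nonneg (hwnn y), abs_mul]
    have h2 : |g y| * |ψ y| ≤ ((g y) ^ 2 + (ψ y) ^ 2) / 2 := by
      nlinarith [sq_nonneg (|g y| - |ψ y|), sq_abs (g y), sq_abs (ψ y)]
    calc |y| ^ b * (|g y| * |ψ y|) ≤ |y| ^ b * (((g y) ^ 2 + (ψ y) ^ 2) / 2) :=
          mul_le_mul_of_nonneg_left h2 (hwnn y)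
      _ = (|y| ^ b * (g y) ^ 2 + |y| ^ b * (ψ y) ^ 2) / 2 := by ring
  -- the integrand of integration by parts
  set E : ℝ → ℝ := fun y => deriv F y * ψ y + F y * deriv ψ y with hE
  have hEae : (fun y : ℝ => |y| ^ b * (deriv ψ y) ^ 2 - |y| ^ b * (g y * ψ y)) =ᵐ[volume] E := by
    filter_upwards [hF, hfae] with y h1 h2
    simp only [hE, h2, ← h1]
    ring
  have IE : Integrable E := (Iwp2.sub Iwgψ).congr hEae
  -- FTC for the product
  have hψftc2 : ∀ y₁ y₂ : ℝ, ψ y₂ - ψ y₁ = ∫ t in y₁..y₂, deriv ψ t := by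
    intro y₁ y₂
    rw [hψftc y₁, hψftc y₂]
    have := intervalIntegral.integral_interval_sub_left (hpi 0 y₂) (hpi 0 y₁)
    linarith
  have hFTC : ∀ a b' : ℝ, a ≤ b' → ∫ t in a..b', E t = F b' * ψ b' - F a * ψ a :=
    fun a b' hab => aux_ftc_mul hFftc hψftc2 hfi hpi hab
  -- limit at +∞
  have ttop : Tendsto (fun y => F y * ψ y) atTop (𝓝 (F 0 * ψ 0 + ∫ y in Ioi (0:ℝ), E y)) := by
    have t1 := intervalIntegral_tendsto_integral_Ioi 0 IE.integrableOn tendsto_id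
    refine (tendsto_const_nhds.add t1).congr' ?_
    filter_upwards [eventually_ge_atTop (0:ℝ)] with y hy
    rw [show (id y : ℝ) = y from rfl, hFTC 0 y hy]; ring
  have tbot : Tendsto (fun y => F y * ψ y) atBot (𝓝 (F 0 * ψ 0 - ∫ y in Iic (0:ℝ), E y)) := by
    have t2 := intervalIntegral_tendsto_integral_Iic 0 IE.integrableOn tendsto_id
    refine (tendsto_const_nhds.sub t2).congr' ?_
    filter_upwards [eventually_le_atBot (0:ℝ)] with y hy
    rw [show (id y : ℝ) = y from rfl, hFTC y 0 hy]; ring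
  -- the dominating integrable function for F·ψ
  have hMb : ∀ᵐ y : ℝ ∂volume,
      |F y * ψ y| ≤ (|y| ^ b * (deriv ψ y) ^ 2 + |y| ^ b * (ψ y) ^ 2) / 2 := by
    filter_upwards [hF] with y h1
    rw [← h1, mul_assoc, abs_mul, abs_of_nonneg (hwnn y), abs_mul]
    have h2 : |deriv ψ y| * |ψ y| ≤ ((deriv ψ y) ^ 2 + (ψ y) ^ 2) / 2 := by
      nlinarith [sq_nonneg (|deriv ψ y| - |ψ y|), sq_abs (deriv ψ y), sq_abs (ψ y)]
    calc |y| ^ b * (|deriv ψ y| * |ψ y|)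
        ≤ |y| ^ b * (((deriv ψ y) ^ 2 + (ψ y) ^ 2) / 2) := mul_le_mul_of_nonneg_left h2 (hwnn y)
      _ = (|y| ^ b * (deriv ψ y) ^ 2 + |y| ^ b * (ψ y) ^ 2) / 2 := by ring
  have IM : Integrable (fun y : ℝ => (|y| ^ b * (deriv ψ y) ^ 2 + |y| ^ b * (ψ y) ^ 2) / 2) :=
    (Iwp2.add Iwψ2).div_const 2
  -- limits are zero
  have htop0 : F 0 * ψ 0 + ∫ y in Ioi (0:ℝ), E y = 0 := by
    by_contra hL
    set L := F 0 * ψ 0 + ∫ y in Ioi (0:ℝ), E y with hLd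
    have hev : ∀ᶠ y in atTop, |L| / 2 < |F y * ψ y| :=
      (ttop.abs).eventually (eventually_gt_nhds (half_lt_self (abs_pos.mpr hL)))
    obtain ⟨N, hN⟩ := eventually_atTop.mp hev
    have hconst : IntegrableOn (fun _ : ℝ => |L| / 2) (Ioi N) volume := by
      refine Integrable.mono' IM.integrableOn aestronglyMeasurable_const ?_
      filter_upwards [ae_restrict_mem measurableSet_Ioi, ae_restrict_of_ae hMb] with y hy h1
      rw [Real.norm_eq_abs, abs_of_nonneg (by positivity)]
      exact le_trans (hN y (le_of_lt hy)).le h1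
    rw [integrableOn_const_iff] at hconst
    rcases hconst with h | h
    · simp [hL] at h
    · rw [Real.volume_Ioi] at h; exact (lt_irrefl _ h).elim
  have hbot0 : F 0 * ψ 0 - ∫ y in Iic (0:ℝ), E y = 0 := by
    by_contra hL
    set L := F 0 * ψ 0 - ∫ y in Iic (0:ℝ), E y with hLd
    have hev : ∀ᶠ y in atBot, |L| / 2 < |F y * ψ y| :=
      (tbot.abs).eventually (eventually_gt_nhds (half_lt_self (abs_pos.mpr hL)))
    obtain ⟨N, hN⟩ := eventually_atBot.mp hev
    have hconst : IntegrableOn (fun _ : ℝ => |L| / 2) (Iic N) volume := by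
      refine Integrable.mono' IM.integrableOn aestronglyMeasurable_const ?_
      filter_upwards [ae_restrict_mem measurableSet_Iic, ae_restrict_of_ae hMb] with y hy h1
      rw [Real.norm_eq_abs, abs_of_nonneg (by positivity)]
      exact le_trans (hN y hy).le h1
    rw [integrableOn_const_iff] at hconst
    rcases hconst with h | h
    · simp [hL] at h
    · rw [Real.volume_Iic] at h; exact (lt_irrefl _ h).elim
  -- total integral of E is zero
  have hEzero : ∫ y : ℝ, E y = 0 := by
    rw [← intervalIntegral.integral_Iic_add_Ioi (IE.integrableOn) (IE.integrableOn)]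
    linarith
  -- the key integration by parts identity
  have keyint : ∫ y : ℝ, |y| ^ b * (g y * ψ y) = ∫ y : ℝ, |y| ^ b * (deriv ψ y) ^ 2 := by
    have h1 : ∫ y : ℝ, (|y| ^ b * (deriv ψ y) ^ 2 - |y| ^ b * (g y * ψ y)) = 0 := by
      rw [integral_congr_ae hEae]; exact hEzero
    rw [integral_sub Iwp2 Iwgψ] at h1
    linarith
  -- final computation
  have split1 : ∫ y : ℝ, |y| ^ b * ((deriv ψ y) ^ 2 + lam * (ψ y) ^ 2)
      = (∫ y : ℝ, |y| ^ b * (deriv ψ y) ^ 2) + lam * ∫ y : ℝ, |y| ^ b * (ψ y) ^ 2 := by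
    have hpt : ∀ y : ℝ, |y| ^ b * ((deriv ψ y) ^ 2 + lam * (ψ y) ^ 2)
        = |y| ^ b * (deriv ψ y) ^ 2 + lam * (|y| ^ b * (ψ y) ^ 2) := fun y => by ring
    have Ia : Integrable (fun y : ℝ => lam * (|y| ^ b * (ψ y) ^ 2)) := Iwψ2.const_mul lam
    rw [integral_congr_ae (ae_of_all _ hpt), integral_add Iwp2 Ia, integral_const_mul]
  have split2 : ∫ y : ℝ, |y| ^ b * (g y + lam * ψ y) ^ 2
      = (∫ y : ℝ, |y| ^ b * (g y) ^ 2) + (2 * lam) * (∫ y : ℝ, |y| ^ b * (g y * ψ y))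
        + lam ^ 2 * ∫ y : ℝ, |y| ^ b * (ψ y) ^ 2 := by
    have hpt : ∀ y : ℝ, |y| ^ b * (g y + lam * ψ y) ^ 2
        = |y| ^ b * (g y) ^ 2 + ((2 * lam) * (|y| ^ b * (g y * ψ y))
          + lam ^ 2 * (|y| ^ b * (ψ y) ^ 2)) := fun y => by ring
    have Ib : Integrable (fun y : ℝ => (2 * lam) * (|y| ^ b * (g y * ψ y))) :=
      Iwgψ.const_mul (2 * lam)
    have Ic : Integrable (fun y : ℝ => lam ^ 2 * (|y| ^ b * (ψ y) ^ 2)) :=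
      Iwψ2.const_mul (lam ^ 2)
    have Ibc : Integrable (fun y : ℝ => (2 * lam) * (|y| ^ b * (g y * ψ y))
        + lam ^ 2 * (|y| ^ b * (ψ y) ^ 2)) := Ib.add Ic
    rw [integral_congr_ae (ae_of_all _ hpt), integral_add hgint Ibc, integral_add Ib Ic,
      integral_const_mul, integral_const_mul]
    ring
  have n1 : 0 ≤ ∫ y : ℝ, |y| ^ b * (g y) ^ 2 :=
    integral_nonneg fun y => mul_nonneg (hwnn y) (sq_nonneg _)
  have n2 : 0 ≤ ∫ y : ℝ, |y| ^ b * (deriv ψ y) ^ 2 :=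
    integral_nonneg fun y => mul_nonneg (hwnn y) (sq_nonneg _)
  rw [split1, split2, keyint]
  nlinarith [hlam.le, n1, n2]
end

section
/- Let s be a real number and m a positive integer with s > m. Then (1/B(s,1/2)) · Σ_{ℓ=0}^{m} C(m,ℓ)·(−1)^ℓ·B(s−ℓ, 1/2) = (−1)^m · (Γ(s−m)/Γ(s)) · (2m)!/(2^{2m}·m!), where B(x,y) = Γ(x)·Γ(y)/Γ(x+y) is the Beta function and C(m,ℓ) is the binomial coefficient. -/
open Real

/-- The Beta function `B(x,y) = Γ(x)·Γ(y)/Γ(x+y)`. -/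
noncomputable def betaFn (x y : ℝ) : ℝ :=
  Real.Gamma x * Real.Gamma y / Real.Gamma (x + y)

lemma Gamma_prod (x : ℝ) (hx : 0 < x) (n : ℕ) :
    Real.Gamma (x + n) = (∏ i ∈ Finset.range n, (x + i)) * Real.Gamma x := by
  induction n with
  | zero => simp
  | succ n ih =>
    rw [show ((n+1 : ℕ) : ℝ) = (n : ℝ) + 1 by push_cast; ring]
    rw [show x + ((n:ℝ)+1) = (x + n) + 1 by ring,
      Real.Gamma_add_one (by positivity), ih, Finset.prod_range_succ]
    ring

noncomputable def rr (s : ℝ) (ℓ : ℕ) : ℝ :=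
  ∏ i ∈ Finset.range ℓ, (s - ℓ + 1/2 + i) / (s - ℓ + i)

lemma rr_zero (s : ℝ) : rr s 0 = 1 := by simp [rr]

lemma rr_succ (s : ℝ) (ℓ : ℕ) :
    rr s (ℓ+1) = rr (s-1) ℓ * ((s - 1/2)/(s-1)) := by
  unfold rr
  rw [Finset.prod_range_succ]
  congr 1
  · apply Finset.prod_congr rfl
    intro i _
    push_cast
    ring_nf
  · push_cast
    ring_nf

lemma key : ∀ (m : ℕ) (s : ℝ), (m:ℝ) < s →
    ∑ ℓ ∈ Finset.range (m+1), (m.choose ℓ : ℝ) * (-1)^ℓ * rr s ℓ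
    = (-1)^m * (∏ i ∈ Finset.range m, ((i:ℝ)+1/2)) / ∏ i ∈ Finset.range m, (s - m + i) := by
  intro m
  induction m with
  | zero => intro s hs; simp [rr]
  | succ m ih =>
    intro s hs
    have hs' : (m:ℝ) < s - 1 := by push_cast at hs ⊢; linarith
    have hsm : (m:ℝ) < s := by push_cast at hs; linarith
    -- step 1: split sum via Pascal
    have h1 : ∑ ℓ ∈ Finset.range (m+2), ((m+1).choose ℓ : ℝ) * (-1)^ℓ * rr s ℓ
        = (∑ ℓ ∈ Finset.range (m+1), (m.choose ℓ : ℝ) * (-1)^ℓ * rr s ℓ)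
          - (s-1/2)/(s-1) *
            ∑ ℓ ∈ Finset.range (m+1), (m.choose ℓ : ℝ) * (-1)^ℓ * rr (s-1) ℓ := by
      rw [Finset.sum_range_succ' (fun ℓ => ((m+1).choose ℓ : ℝ) * (-1)^ℓ * rr s ℓ) (m+1)]
      have h2 : ∀ ℓ ∈ Finset.range (m+1),
          ((m+1).choose (ℓ+1) : ℝ) * (-1)^(ℓ+1) * rr s (ℓ+1)
          = ((m.choose (ℓ+1) : ℝ) * (-1)^(ℓ+1) * rr s (ℓ+1))
            + (-((s-1/2)/(s-1))) * ((m.choose ℓ : ℝ) * (-1)^ℓ * rr (s-1) ℓ) := by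
        intro ℓ _
        rw [Nat.choose_succ_succ, rr_succ]
        push_cast
        ring
      rw [Finset.sum_congr rfl h2, Finset.sum_add_distrib, ← Finset.mul_sum]
      have h3 : (∑ ℓ ∈ Finset.range (m+1), (m.choose (ℓ+1) : ℝ) * (-1)^(ℓ+1) * rr s (ℓ+1))
          + ((m+1).choose 0 : ℝ) * (-1)^0 * rr s 0
          = ∑ ℓ ∈ Finset.range (m+1), (m.choose ℓ : ℝ) * (-1)^ℓ * rr s ℓ := by
        rw [show ((m+1).choose 0 : ℝ) * (-1)^0 * rr s 0
            = (m.choose 0 : ℝ) * (-1)^0 * rr s 0 by simp,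
          ← Finset.sum_range_succ' (fun ℓ => (m.choose ℓ : ℝ) * (-1)^ℓ * rr s ℓ) (m+1),
          Finset.sum_range_succ]
        simp [Nat.choose_succ_self]
      linarith [h3]
    rw [h1, ih s hsm, ih (s-1) hs']
    -- algebra
    have hD1 : ∏ i ∈ Finset.range (m+1), (s - ((m:ℝ)+1) + i)
        = (∏ i ∈ Finset.range m, (s - m + i)) * (s - m - 1) := by
      rw [Finset.prod_range_succ' (fun i => s - ((m:ℝ)+1) + i) m]
      congr 1
      · apply Finset.prod_congr rfl; intro i _; push_cast; ring
      · push_cast; ring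
    have hD2 : ∏ i ∈ Finset.range (m+1), (s - ((m:ℝ)+1) + i)
        = (∏ i ∈ Finset.range m, ((s-1) - m + i)) * (s - 1) := by
      rw [Finset.prod_range_succ]
      congr 1
      · apply Finset.prod_congr rfl; intro i _; push_cast; ring
      · push_cast; ring
    have hPm : ∏ i ∈ Finset.range (m+1), ((i:ℝ)+1/2)
        = (∏ i ∈ Finset.range m, ((i:ℝ)+1/2)) * ((m:ℝ)+1/2) :=
      Finset.prod_range_succ _ m
    have ha : (∏ i ∈ Finset.range m, (s - (m:ℝ) + i)) ≠ 0 := by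
      apply Finset.prod_ne_zero_iff.2
      intro i hi
      have : (0:ℝ) ≤ i := by positivity
      nlinarith [hsm]
    have hb : (∏ i ∈ Finset.range m, ((s-1) - (m:ℝ) + i)) ≠ 0 := by
      apply Finset.prod_ne_zero_iff.2
      intro i hi
      have : (0:ℝ) ≤ i := by positivity
      nlinarith [hs']
    have hrel : (∏ i ∈ Finset.range m, (s - (m:ℝ) + i)) * (s - m - 1)
        = (∏ i ∈ Finset.range m, ((s-1) - (m:ℝ) + i)) * (s - 1) := by
      rw [← hD1, hD2]
    have hcast : ((m+1:ℕ):ℝ) = (m:ℝ)+1 := by push_cast; ring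
    rw [hcast, hD1, hPm]
    have hs1 : s - 1 ≠ 0 := by nlinarith [hsm]
    have hsm1 : s - (m:ℝ) - 1 ≠ 0 := by push_cast at hs; nlinarith
    have hbval : (∏ i ∈ Finset.range m, ((s-1) - (m:ℝ) + i))
        = (∏ i ∈ Finset.range m, (s - m + i)) * (s - m - 1) / (s - 1) := by
      field_simp
      linarith [hrel]
    rw [hbval]
    field_simp
    ring

lemma fact_prod (m : ℕ) :
    ((2*m).factorial : ℝ) = 2^(2*m) * (m.factorial : ℝ) * ∏ i ∈ Finset.range m, ((i:ℝ)+1/2) := by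
  induction m with
  | zero => simp
  | succ m ih =>
    have h : 2*(m+1) = (2*m+1)+1 := by ring
    rw [h, Nat.factorial_succ, Nat.factorial_succ, Nat.factorial_succ,
      Finset.prod_range_succ]
    push_cast
    push_cast at ih
    rw [ih]
    ring

lemma beta_ratio (s : ℝ) (ℓ : ℕ) (hs : (ℓ:ℝ) < s) :
    betaFn (s - ℓ) (1/2) = betaFn s (1/2) * rr s ℓ := by
  have h1 : (0:ℝ) < s - ℓ := by linarith
  have h2 : (0:ℝ) < s - ℓ + 1/2 := by linarith
  have hG1 : Real.Gamma s = (∏ i ∈ Finset.range ℓ, (s - ℓ + i)) * Real.Gamma (s - ℓ) := by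
    have := Gamma_prod (s - ℓ) h1 ℓ
    rwa [show s - (ℓ:ℝ) + ℓ = s by ring] at this
  have hG2 : Real.Gamma (s + 1/2)
      = (∏ i ∈ Finset.range ℓ, (s - ℓ + 1/2 + i)) * Real.Gamma (s - ℓ + 1/2) := by
    have := Gamma_prod (s - ℓ + 1/2) h2 ℓ
    rwa [show s - (ℓ:ℝ) + 1/2 + ℓ = s + 1/2 by ring] at this
  have hD : (∏ i ∈ Finset.range ℓ, (s - (ℓ:ℝ) + i)) ≠ 0 := by
    apply Finset.prod_ne_zero_iff.2
    intro i hi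
    have : (0:ℝ) ≤ i := by positivity
    nlinarith
  have hGs2 : Real.Gamma (s - ℓ + 1/2) ≠ 0 := (Real.Gamma_pos_of_pos h2).ne'
  have hGs : Real.Gamma (s + 1/2) ≠ 0 :=
    (Real.Gamma_pos_of_pos (by linarith : (0:ℝ) < s + 1/2)).ne'
  unfold betaFn rr
  rw [Finset.prod_div_distrib, hG1, hG2]
  rw [show s - (ℓ:ℝ) + 1/2 = s - ℓ + 1/2 by ring]
  field_simp

/-- for a real `s` and a positive integer `m` with `s > m`,
`(1/B(s,1/2))·Σ_{ℓ=0}^{m} C(m,ℓ)·(−1)^ℓ·B(s−ℓ,1/2)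
  = (−1)^m·(Γ(s−m)/Γ(s))·(2m)!/(2^{2m}·m!)`. -/
theorem beta_alternating_sum (s : ℝ) (m : ℕ) (hm : 0 < m) (hs : (m : ℝ) < s) :
    1 / betaFn s (1 / 2) *
        ∑ ℓ ∈ Finset.range (m + 1),
          (m.choose ℓ : ℝ) * (-1) ^ ℓ * betaFn (s - ℓ) (1 / 2)
      = (-1) ^ m * (Real.Gamma (s - m) / Real.Gamma s) *
          (Nat.factorial (2 * m) : ℝ) / ((2 : ℝ) ^ (2 * m) * (Nat.factorial m : ℝ)) := by
  have hs0 : (0:ℝ) < s := lt_of_le_of_lt (by positivity) hs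
  have hGs : (0:ℝ) < Real.Gamma s := Real.Gamma_pos_of_pos hs0
  have hGh : (0:ℝ) < Real.Gamma (1/2) := Real.Gamma_pos_of_pos (by norm_num)
  have hGsh : (0:ℝ) < Real.Gamma (s + 1/2) := Real.Gamma_pos_of_pos (by linarith)
  have hB : betaFn s (1/2) ≠ 0 := by
    unfold betaFn
    exact ne_of_gt (div_pos (mul_pos hGs hGh) hGsh)
  have hsum : ∑ ℓ ∈ Finset.range (m + 1),
        (m.choose ℓ : ℝ) * (-1) ^ ℓ * betaFn (s - ℓ) (1 / 2)
      = betaFn s (1/2) * ∑ ℓ ∈ Finset.range (m + 1),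
        (m.choose ℓ : ℝ) * (-1) ^ ℓ * rr s ℓ := by
    rw [Finset.mul_sum]
    apply Finset.sum_congr rfl
    intro ℓ hℓ
    have hℓm : (ℓ:ℝ) ≤ (m:ℝ) := by
      have := Finset.mem_range.1 hℓ
      exact_mod_cast Nat.lt_succ_iff.1 this
    rw [beta_ratio s ℓ (lt_of_le_of_lt hℓm hs)]
    ring
  rw [hsum, key m s hs, fact_prod m]
  have hGsm : (0:ℝ) < Real.Gamma (s - m) := Real.Gamma_pos_of_pos (by linarith)
  have hGseq : Real.Gamma s = (∏ i ∈ Finset.range m, (s - m + i)) * Real.Gamma (s - m) := by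
    have := Gamma_prod (s - m) (by linarith) m
    rwa [show s - (m:ℝ) + m = s by ring] at this
  have hD : (∏ i ∈ Finset.range m, (s - (m:ℝ) + i)) ≠ 0 := by
    apply Finset.prod_ne_zero_iff.2
    intro i hi
    have : (0:ℝ) ≤ i := by positivity
    nlinarith
  have hF : (0:ℝ) < (m.factorial : ℝ) := by positivity
  rw [hGseq]
  field_simp
end

section
/- Let s > 0. Then for every ξ ∈ ℝ, the unitary Fourier transform of ψ_s satisfies (1/√(2π)) · ∫_ℝ e^{−i·ξ·y}·ψ_s(y) dy = (√2·Γ(s+1/2)/Γ(s)) · (1+ξ²)^{−(1+2s)/2}. -/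
open MeasureTheory Real Filter Set

lemma key_pointwise (s : ℝ) {y : ℝ} (hy : 0 < y) (t : ℝ) :
    |(y/2) * Real.exp t| • (Real.exp (-((y/2) * Real.exp t)) *
        Real.exp (-(y^2/(4*((y/2) * Real.exp t)))) * ((y/2) * Real.exp t) ^ (s-1))
      = (y/2) ^ s * (Real.exp (s * t) * Real.exp (-(y * Real.cosh t))) := by
  set c := y / 2 with hc
  have hcpos : 0 < c := by positivity
  have he : (0:ℝ) < Real.exp t := Real.exp_pos t
  have h1 : y^2/(4*(c * Real.exp t)) = c * Real.exp (-t) := by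
    rw [Real.exp_neg]; field_simp [hc]; ring
  have h2 : (c * Real.exp t) ^ (s-1) = c ^ (s-1) * Real.exp ((s-1) * t) := by
    rw [Real.mul_rpow hcpos.le he.le, Real.rpow_def_of_pos he, Real.log_exp, mul_comm t (s-1)]
  have h3 : c * Real.exp t + c * Real.exp (-t) = y * Real.cosh t := by
    rw [Real.cosh_eq, hc]; ring
  rw [smul_eq_mul, abs_of_pos (by positivity), h1, h2]
  have h4 : Real.exp (-(c * Real.exp t)) * Real.exp (-(c * Real.exp (-t)))
      = Real.exp (-(y * Real.cosh t)) := by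
    rw [← Real.exp_add, ← h3]; ring_nf
  have h5 : c * c ^ (s-1) = c ^ s := by
    have h := Real.rpow_add hcpos 1 (s-1)
    rw [Real.rpow_one] at h
    rw [← h]; ring_nf
  have h6 : Real.exp t * Real.exp ((s-1)*t) = Real.exp (s * t) := by
    rw [← Real.exp_add]; ring_nf
  rw [← h4, ← h5, ← h6]; ring

lemma himg_exp {c : ℝ} (hc : 0 < c) : (fun t : ℝ => c * Real.exp t) '' univ = Ioi 0 := by
  ext x
  simp only [image_univ, mem_range, mem_Ioi]
  constructor
  · rintro ⟨t, rfl⟩; positivity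
  · intro hx
    exact ⟨Real.log (x / c), by
      rw [Real.exp_log (by positivity), mul_div_cancel₀ _ hc.ne']⟩

lemma hderiv_exp {c : ℝ} : ∀ t ∈ (univ : Set ℝ), HasDerivWithinAt (fun t : ℝ => c * Real.exp t)
    (c * Real.exp t) univ t := fun t _ =>
  ((Real.hasDerivAt_exp t).const_mul c).hasDerivWithinAt

lemma hinj_exp {c : ℝ} (hc : 0 < c) : InjOn (fun t : ℝ => c * Real.exp t) univ := by
  intro a _ b _ h
  simpa using Real.exp_injective (mul_left_cancel₀ hc.ne' h)

lemma hF_int (s : ℝ) (hs : 0 < s) (y : ℝ) :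
    IntegrableOn (fun u : ℝ => Real.exp (-u) * Real.exp (-(y^2/(4*u))) * u ^ (s-1)) (Ioi 0) := by
  refine (Real.GammaIntegral_convergent hs).mono' ?_ ?_
  · apply Measurable.aestronglyMeasurable
    exact ((measurable_neg.exp.mul ((measurable_const.div (measurable_const.mul measurable_id)).neg.exp)).mul
      (measurable_id.pow_const _))|>.mono le_rfl le_rfl |>.comp measurable_id |>.mono le_rfl le_rfl
  · filter_upwards [ae_restrict_mem measurableSet_Ioi] with u hu
    have hu : (0:ℝ) < u := hu
    have h1 : Real.exp (-(y^2/(4*u))) ≤ 1 := by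
      rw [Real.exp_le_one_iff]
      have : (0:ℝ) ≤ y^2/(4*u) := by positivity
      linarith
    have h2 : (0:ℝ) ≤ u ^ (s-1) := Real.rpow_nonneg hu.le _
    rw [Real.norm_eq_abs, abs_of_nonneg (by positivity)]
    calc Real.exp (-u) * Real.exp (-(y^2/(4*u))) * u ^ (s-1)
        ≤ Real.exp (-u) * 1 * u ^ (s-1) := by
          apply mul_le_mul_of_nonneg_right _ h2
          exact mul_le_mul_of_nonneg_left h1 (Real.exp_pos _).le
      _ = Real.exp (-u) * u ^ (s-1) := by ring

lemma hg_int (s : ℝ) (hs : 0 < s) {y : ℝ} (hy : 0 < y) :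
    Integrable (fun t : ℝ => Real.exp (s * t) * Real.exp (-(y * Real.cosh t))) := by
  set c := y / 2 with hc
  have hcpos : 0 < c := by positivity
  have h := (integrableOn_image_iff_integrableOn_abs_deriv_smul MeasurableSet.univ
      (hderiv_exp (c := c)) (hinj_exp hcpos)
      (fun u : ℝ => Real.exp (-u) * Real.exp (-(y^2/(4*u))) * u ^ (s-1))).mp
  rw [himg_exp hcpos] at h
  have h2 := h (hF_int s hs y)
  rw [integrableOn_univ] at h2
  have h3 : Integrable (fun t : ℝ =>
      c ^ s * (Real.exp (s * t) * Real.exp (-(y * Real.cosh t)))) := by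
    apply h2.congr
    filter_upwards with t
    exact key_pointwise s hy t
  have h4 := h3.const_mul (c ^ s)⁻¹
  have hne : c ^ s ≠ 0 := (Real.rpow_pos_of_pos hcpos s).ne'
  apply h4.congr
  filter_upwards with t
  field_simp

lemma besselK_repr (s : ℝ) (hs : 0 < s) {y : ℝ} (hy : 0 < y) :
    ∫ u in Ioi (0:ℝ), Real.exp (-u) * Real.exp (-(y^2/(4*u))) * u ^ (s-1)
      = 2 ^ (1-s) * y ^ s * besselK s y := by
  set c := y / 2 with hc
  have hcpos : 0 < c := by positivity
  have hsub := integral_image_eq_integral_abs_deriv_smul MeasurableSet.univ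
      (hderiv_exp (c := c)) (hinj_exp hcpos)
      (fun u : ℝ => Real.exp (-u) * Real.exp (-(y^2/(4*u))) * u ^ (s-1))
  rw [himg_exp hcpos] at hsub
  rw [hsub, MeasureTheory.Measure.restrict_univ]
  simp_rw [hc, key_pointwise s hy]
  rw [integral_const_mul]
  -- now: c^s * ∫ t, exp (s*t) * exp (-(y cosh t)) = 2^(1-s) * y^s * besselK s y
  have hg := hg_int s hs hy
  set g := fun t : ℝ => Real.exp (s * t) * Real.exp (-(y * Real.cosh t)) with hgdef
  have hsplit : ∫ t : ℝ, g t = (∫ t in Iic (0:ℝ), g t) + ∫ t in Ioi (0:ℝ), g t :=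
    (intervalIntegral.integral_Iic_add_Ioi hg.integrableOn hg.integrableOn).symm
  have hneg : ∫ t in Iic (0:ℝ), g t = ∫ t in Ioi (0:ℝ), g (-t) := by
    rw [integral_comp_neg_Ioi]; norm_num
  have hcomb : (∫ t in Ioi (0:ℝ), g (-t)) + ∫ t in Ioi (0:ℝ), g t
      = ∫ t in Ioi (0:ℝ), (g (-t) + g t) := by
    rw [integral_add (hg.comp_neg.integrableOn) hg.integrableOn]
  have hcosh : ∀ t : ℝ, g (-t) + g t = 2 * (Real.exp (-(y * Real.cosh t)) * Real.cosh (s * t)) := by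
    intro t
    simp only [hgdef, Real.cosh_neg, mul_neg]
    rw [Real.cosh_eq (s * t)]
    ring
  rw [hsplit, hneg, hcomb]
  simp_rw [hcosh]
  rw [integral_const_mul]
  show c ^ s * (2 * besselK s y) = _
  have h1 : c ^ s = y ^ s / 2 ^ s := Real.div_rpow hy.le (by norm_num : (0:ℝ) ≤ 2) s
  have h2 : (2:ℝ) ^ (1-s) = 2 / 2 ^ s := by
    rw [Real.rpow_sub (by norm_num), Real.rpow_one]
  have h3 : (0:ℝ) < 2 ^ s := Real.rpow_pos_of_pos (by norm_num) s
  rw [h1, h2]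
  field_simp

lemma psi_repr (s : ℝ) (hs : 0 < s) (y : ℝ) :
    psi s y = (1 / Real.Gamma s) *
      ∫ u in Ioi (0:ℝ), Real.exp (-u) * Real.exp (-(y^2/(4*u))) * u ^ (s-1) := by
  rcases eq_or_ne y 0 with rfl | hy
  · have : ∀ u : ℝ, Real.exp (-u) * Real.exp (-((0:ℝ)^2/(4*u))) * u ^ (s-1)
        = Real.exp (-u) * u ^ (s-1) := by
      intro u; norm_num
    simp_rw [this]
    rw [← Real.Gamma_eq_integral hs, psi]
    rw [if_pos rfl]
    field_simp [(Real.Gamma_pos_of_pos hs).ne']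
  · have hay : 0 < |y| := abs_pos.mpr hy
    have h := besselK_repr s hs hay
    rw [sq_abs] at h
    rw [h, psi, if_neg hy]
    ring


open Complex in
/-- for `s > 0` the unitary Fourier transform of `ψ_s` equals
`(√2·Γ(s+1/2)/Γ(s))·(1+ξ²)^{−(1+2s)/2}`. -/
theorem psi_fourier_transform (s : ℝ) (hs : 0 < s) (ξ : ℝ) :
    (1 / (Real.sqrt (2 * Real.pi)) : ℂ) *
        ∫ y : ℝ, Complex.exp (-(Complex.I * ξ * y)) * (psi s y : ℂ)
      = ((Real.sqrt 2 * Real.Gamma (s + 1 / 2) / Real.Gamma s) *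
          (1 + ξ ^ 2) ^ (-((1 + 2 * s) / 2)) : ℝ) := by
  have hΓ : 0 < Real.Gamma s := Real.Gamma_pos_of_pos hs
  set f : ℝ → ℝ → ℝ := fun y u => Real.exp (-u) * Real.exp (-(y^2/(4*u))) * u ^ (s-1) with hf
  set G : ℝ → ℝ → ℂ := fun y u => Complex.exp (-(Complex.I * ξ * y)) * ((f y u : ℝ) : ℂ)
    with hGdef
  have hphase : ∀ y : ℝ, ‖Complex.exp (-(Complex.I * (ξ:ℂ) * (y:ℂ)))‖ = 1 := by
    intro y
    rw [Complex.norm_exp]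
    simp
  have hf_nonneg : ∀ (y : ℝ) {u : ℝ}, 0 < u → 0 ≤ f y u := by
    intro y u hu
    have h := Real.rpow_nonneg hu.le (s-1)
    simp only [hf]
    positivity
  have hfy_int : ∀ {u : ℝ}, 0 < u → Integrable (fun y => f y u) := by
    intro u hu
    have hb : (0:ℝ) < 1/(4*u) := by positivity
    have heq : (fun y : ℝ => f y u)
        = fun y => (Real.exp (-u) * u ^ (s-1)) * Real.exp (-(1/(4*u)) * y^2) := by
      funext y
      simp only [hf]
      rw [show -(1/(4*u)) * y^2 = -(y^2/(4*u)) by field_simp]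
      ring
    rw [heq]
    exact (integrable_exp_neg_mul_sq hb).const_mul _
  -- step 1 : rewrite integrand
  have step1 : ∀ y : ℝ, Complex.exp (-(Complex.I * ξ * y)) * (psi s y : ℂ)
      = ((1 / Real.Gamma s : ℝ) : ℂ) * ∫ u in Ioi (0:ℝ), G y u := by
    intro y
    have h1 : (∫ u in Ioi (0:ℝ), G y u)
        = Complex.exp (-(Complex.I * ξ * y)) * ∫ u in Ioi (0:ℝ), ((f y u : ℝ) : ℂ) :=
      integral_const_mul _ _
    have h2 : (∫ u in Ioi (0:ℝ), ((f y u : ℝ) : ℂ))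
        = ((∫ u in Ioi (0:ℝ), f y u : ℝ) : ℂ) := integral_ofReal
    rw [h1, h2, psi_repr s hs y]
    push_cast
    ring
  simp_rw [step1]
  rw [integral_const_mul]
  -- measurability of the kernel on the product
  have hmeas : AEStronglyMeasurable (Function.uncurry G)
      ((volume : Measure ℝ).prod ((volume : Measure ℝ).restrict (Ioi 0))) := by
    apply Measurable.aestronglyMeasurable
    simp only [hGdef, hf]
    fun_prop
  -- integrability on the product
  have hint : Integrable (Function.uncurry G)
      ((volume : Measure ℝ).prod ((volume : Measure ℝ).restrict (Ioi 0))) := by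
    rw [integrable_prod_iff' hmeas]
    constructor
    · filter_upwards [ae_restrict_mem measurableSet_Ioi] with u hu
      have hu : (0:ℝ) < u := hu
      refine Integrable.bdd_mul ((hfy_int hu).ofReal)
        ((show Measurable fun y : ℝ => Complex.exp (-(Complex.I * ξ * y)) by
          fun_prop).aestronglyMeasurable) (Filter.Eventually.of_forall fun y => (hphase y).le)
    · have hnice : Integrable
          (fun u : ℝ => (2 * Real.sqrt π) * (Real.exp (-u) * u ^ ((s+1/2)-1)))
          ((volume : Measure ℝ).restrict (Ioi 0)) :=
        (Real.GammaIntegral_convergent (by linarith : (0:ℝ) < s + 1/2)).const_mul _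
      refine hnice.congr ?_
      filter_upwards [ae_restrict_mem measurableSet_Ioi] with u hu
      have hu : (0:ℝ) < u := hu
      have hb : (0:ℝ) < 1/(4*u) := by positivity
      have hnorm : ∀ y : ℝ, ‖G y u‖
          = (Real.exp (-u) * u ^ (s-1)) * Real.exp (-(1/(4*u)) * y^2) := by
        intro y
        rw [hGdef]
        simp only
        rw [norm_mul, hphase, one_mul, Complex.norm_real, Real.norm_eq_abs,
          _root_.abs_of_nonneg (hf_nonneg y hu)]
        simp only [hf]
        rw [show -(1/(4*u)) * y^2 = -(y^2/(4*u)) by field_simp]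
        ring
      have hG' : ∀ y : ℝ, Function.uncurry G (y, u) = G y u := fun _ => rfl
      simp_rw [hG', hnorm]
      rw [integral_const_mul, integral_gaussian]
      have h1 : π / (1/(4*u)) = 4*π*u := by field_simp
      rw [h1]
      have h2 : Real.sqrt (4*π*u) = 2 * Real.sqrt π * Real.sqrt u := by
        rw [show 4*π*u = (4*π)*u by ring, Real.sqrt_mul (by positivity),
          show (4:ℝ)*π = 2^2*π by ring, Real.sqrt_mul (by positivity),
          Real.sqrt_sq (by norm_num : (0:ℝ) ≤ 2)]
      have h3 : Real.sqrt u = u ^ ((1:ℝ)/2) := Real.sqrt_eq_rpow u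
      have h4 : u ^ (s-1) * u ^ ((1:ℝ)/2) = u ^ ((s+1/2)-1) := by
        rw [← Real.rpow_add hu]; ring_nf
      rw [h2, h3]
      calc 2 * Real.sqrt π * (Real.exp (-u) * u ^ (s+1/2-1))
          = Real.exp (-u) * (u ^ (s-1) * u ^ ((1:ℝ)/2)) * (2 * Real.sqrt π) := by
            rw [h4]; ring
        _ = Real.exp (-u) * u ^ (s-1) * (2 * Real.sqrt π * u ^ ((1:ℝ)/2)) := by ring
  -- Fubini
  rw [MeasureTheory.integral_integral_swap hint]
  -- inner Gaussian integral
  have hinner : ∀ u ∈ Ioi (0:ℝ), (∫ y : ℝ, G y u)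
      = ((Real.exp (-u) * u ^ (s-1) * ((4*π*u) ^ ((1:ℝ)/2) * Real.exp (-(ξ^2*u))) : ℝ) : ℂ) := by
    intro u hu
    have hu : (0:ℝ) < u := hu
    have hb : (0:ℝ) < (((1/(4*u):ℝ)):ℂ).re := by rw [Complex.ofReal_re]; positivity
    have key := fourierIntegral_gaussian hb (-ξ : ℂ)
    have heq : ∀ y : ℝ, G y u = ((Real.exp (-u) * u ^ (s-1) : ℝ) : ℂ) *
        (Complex.exp (Complex.I * (-ξ:ℂ) * y) *
          Complex.exp (-(((1/(4*u):ℝ)):ℂ) * (y:ℂ)^2)) := by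
      intro y
      rw [hGdef]
      simp only [hf]
      rw [show (Complex.I * (-ξ:ℂ) * (y:ℂ)) = -(Complex.I * ξ * y) by ring]
      rw [show (-(((1/(4*u):ℝ)):ℂ) * (y:ℂ)^2) = ((-(y^2/(4*u)) : ℝ) : ℂ) by
        push_cast; field_simp]
      rw [← Complex.ofReal_exp]
      push_cast
      ring
    simp_rw [heq]
    rw [integral_const_mul, key]
    have e1 : ((π:ℂ) / ((1/(4*u):ℝ):ℂ)) = ((4*π*u : ℝ) : ℂ) := by
      push_cast; field_simp
    have e2 : (((4*π*u : ℝ)):ℂ) ^ (1/2 : ℂ) = (((4*π*u) ^ ((1:ℝ)/2) : ℝ) : ℂ) := by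
      rw [show (1/2 : ℂ) = (((1:ℝ)/2 : ℝ) : ℂ) by norm_num]
      exact (Complex.ofReal_cpow (by positivity) _).symm
    have e3 : (-(-ξ:ℂ)^2 / (4 * ((1/(4*u):ℝ):ℂ))) = ((-(ξ^2*u) : ℝ) : ℂ) := by
      push_cast; field_simp
    rw [e1, e2, e3, ← Complex.ofReal_exp]
    push_cast
    ring
  rw [setIntegral_congr_fun measurableSet_Ioi hinner]
  rw [show (∫ u in Ioi (0:ℝ), ((Real.exp (-u) * u ^ (s-1) * ((4*π*u) ^ ((1:ℝ)/2) * Real.exp (-(ξ^2*u))) : ℝ) : ℂ))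
      = ((∫ u in Ioi (0:ℝ), Real.exp (-u) * u ^ (s-1) * ((4*π*u) ^ ((1:ℝ)/2) * Real.exp (-(ξ^2*u))) : ℝ) : ℂ)
    from integral_ofReal]
  -- outer real integral
  have hone : (0:ℝ) < 1 + ξ^2 := by positivity
  have hreal : ∫ u in Ioi (0:ℝ),
        Real.exp (-u) * u ^ (s-1) * ((4*π*u) ^ ((1:ℝ)/2) * Real.exp (-(ξ^2*u)))
      = (4*π) ^ ((1:ℝ)/2) * ((1/(1+ξ^2)) ^ (s+1/2) * Real.Gamma (s+1/2)) := by
    rw [← integral_rpow_mul_exp_neg_mul_Ioi (show (0:ℝ) < s+1/2 by linarith) hone,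
      ← integral_const_mul]
    apply setIntegral_congr_fun measurableSet_Ioi
    intro u hu
    have hu : (0:ℝ) < u := hu
    have h1 : (4*π*u) ^ ((1:ℝ)/2) = (4*π)^((1:ℝ)/2) * u^((1:ℝ)/2) := by
      rw [show 4*π*u = (4*π)*u by ring]
      exact Real.mul_rpow (by positivity) hu.le
    have h2 : u ^ (s-1) * u ^ ((1:ℝ)/2) = u ^ (s+1/2-1) := by
      rw [← Real.rpow_add hu]; ring_nf
    have h3 : Real.exp (-u) * Real.exp (-(ξ^2*u)) = Real.exp (-((1+ξ^2)*u)) := by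
      rw [← Real.exp_add]; ring_nf
    show Real.exp (-u) * u ^ (s-1) * ((4*π*u) ^ ((1:ℝ)/2) * Real.exp (-(ξ^2*u)))
        = (4*π)^((1:ℝ)/2) * (u ^ (s+1/2-1) * Real.exp (-((1+ξ^2)*u)))
    rw [h1, ← h2, ← h3]
    ring
  rw [hreal]
  rw [show (1 / (↑(Real.sqrt (2*π)) : ℂ)) = ((1/Real.sqrt (2*π) : ℝ) : ℂ) by push_cast; ring,
    ← Complex.ofReal_mul, ← Complex.ofReal_mul, Complex.ofReal_inj]
  have e1 : ((4:ℝ)*π) ^ ((1:ℝ)/2) = 2 * Real.sqrt π := by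
    rw [← Real.sqrt_eq_rpow, show (4:ℝ)*π = 2^2*π by ring, Real.sqrt_mul (by positivity),
      Real.sqrt_sq (by norm_num : (0:ℝ) ≤ 2)]
  have e2 : ((1:ℝ)/(1+ξ^2)) ^ (s+1/2) = (1+ξ^2) ^ (-((1+2*s)/2)) := by
    rw [show -((1+2*s)/2) = -(s+1/2) by ring, Real.rpow_neg (by positivity), one_div,
      Real.inv_rpow (by positivity)]
  have e3 : Real.sqrt (2*π) = Real.sqrt 2 * Real.sqrt π := Real.sqrt_mul (by norm_num) π
  have m2 : Real.sqrt 2 * Real.sqrt 2 = 2 := Real.mul_self_sqrt (by norm_num)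
  have hπ : 0 < Real.sqrt π := Real.sqrt_pos.mpr pi_pos
  have h2' : (0:ℝ) < Real.sqrt 2 := Real.sqrt_pos.mpr (by norm_num)
  rw [e1, e2, e3]
  field_simp
  ring_nf
  rw [Real.sq_sqrt (by norm_num : (0:ℝ) ≤ 2)]
end

section
/- Let s > 0 and let α be a real number with −1/2 < α < 2s + 1/2. Denote by ψ̂_s the unitary Fourier transform of ψ_s, ψ̂_s(ξ) = (1/√(2π))·∫_ℝ e^{−i·ξ·y}·ψ_s(y) dy. Then ∫_ℝ |ξ|^{2α}·|ψ̂_s(ξ)|² dξ = ( Γ(s+1/2)² / (s·Γ(2s)·Γ(s)²) ) · Γ(α+1/2) · Γ(2s−α+1/2). Moreover, if α ≥ 2s + 1/2 then ∫_ℝ |ξ|^{2α}·|ψ̂_s(ξ)|² dξ = ∞. -/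
open MeasureTheory Real Filter Set

/-- The unitary Fourier transform of `ψ_s`. -/
noncomputable def psiHat (s : ℝ) (ξ : ℝ) : ℂ :=
  (1 / (Real.sqrt (2 * Real.pi)) : ℂ) *
    ∫ y : ℝ, Complex.exp (-(Complex.I * ξ * y)) * (psi s y : ℂ)

lemma int_g {s : ℝ} (hs : 0 < s) (y : ℝ) :
    IntegrableOn (fun v : ℝ => v ^ (s - 1) * rexp (-(v + y ^ 2 / (4 * v)))) (Ioi 0) := by
  refine (Real.GammaIntegral_convergent hs).mono' ?_ ?_
  · apply Measurable.aestronglyMeasurable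
    fun_prop
  · filter_upwards [ae_restrict_mem measurableSet_Ioi] with v hv
    have hv0 : (0:ℝ) < v := hv
    have h1 : (0:ℝ) ≤ y ^ 2 / (4 * v) := by positivity
    rw [Real.norm_eq_abs, abs_mul, abs_of_nonneg (Real.rpow_nonneg hv0.le _),
      abs_of_nonneg (Real.exp_pos _).le, mul_comm (rexp (-v))]
    gcongr
    linarith

lemma image_pos {y : ℝ} (hy : 0 < y/2) :
    (fun t : ℝ => y / 2 * Real.exp t) '' (Ioi 0) = Ioi (y / 2) := by
  ext v
  simp only [mem_image, mem_Ioi]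
  constructor
  · rintro ⟨t, ht, rfl⟩
    have h1 : 1 < Real.exp t := Real.one_lt_exp_iff.mpr ht
    nlinarith
  · intro hv
    have hv0 : (0:ℝ) < v := hy.trans hv
    have hy0 : (0:ℝ) < y := by linarith
    refine ⟨Real.log (v / (y/2)), Real.log_pos (by rw [lt_div_iff₀ hy]; linarith), ?_⟩
    rw [Real.exp_log (by positivity)]
    field_simp

lemma image_neg {y : ℝ} (hy : 0 < y/2) :
    (fun t : ℝ => y / 2 * Real.exp (-t)) '' (Ioi 0) = Ioo 0 (y / 2) := by
  ext v
  simp only [mem_image, mem_Ioi, mem_Ioo]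
  constructor
  · rintro ⟨t, ht, rfl⟩
    have h1 : Real.exp (-t) < 1 := Real.exp_lt_one_iff.mpr (by linarith)
    have h2 : 0 < Real.exp (-t) := Real.exp_pos _
    constructor
    · positivity
    · nlinarith
  · rintro ⟨hv0, hv⟩
    have hy0 : (0:ℝ) < y := by linarith
    refine ⟨Real.log ((y/2) / v), Real.log_pos (by rw [lt_div_iff₀ hv0]; linarith), ?_⟩
    rw [Real.exp_neg, Real.exp_log (by positivity)]
    field_simp

lemma besselK_key {s : ℝ} (hs : 0 < s) {y : ℝ} (hy : 0 < y) :
    ∫ v in Ioi (0:ℝ), v ^ (s - 1) * rexp (-(v + y ^ 2 / (4 * v)))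
      = (y/2) ^ s * (2 * besselK s y) := by
  have hy2 : 0 < y / 2 := by linarith
  set g : ℝ → ℝ := fun v => v ^ (s - 1) * rexp (-(v + y ^ 2 / (4 * v))) with hgdef
  have hgi : IntegrableOn g (Ioi 0) := int_g hs y
  have hpow : (y/2:ℝ) ^ s = (y/2) ^ (s-1) * (y/2) := by
    nth_rewrite 1 [show s = s - 1 + 1 by ring]
    rw [Real.rpow_add_one hy2.ne']
  -- positive branch
  have hderiv1 : ∀ t ∈ Ioi (0:ℝ),
      HasDerivWithinAt (fun t : ℝ => y / 2 * Real.exp t) (y / 2 * Real.exp t) (Ioi 0) t :=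
    fun t _ => ((Real.hasDerivAt_exp t).const_mul (y/2)).hasDerivWithinAt
  have hinj1 : InjOn (fun t : ℝ => y / 2 * Real.exp t) (Ioi 0) :=
    fun a _ b _ h => Real.exp_injective (mul_left_cancel₀ (ne_of_gt hy2) h)
  have key1 : ∀ t ∈ Ioi (0:ℝ),
      |y / 2 * Real.exp t| • g (y / 2 * Real.exp t)
        = (y/2) ^ s * (rexp (s * t) * rexp (-(y * Real.cosh t))) := by
    intro t _
    have he : (0:ℝ) < Real.exp t := Real.exp_pos t
    have hb : (0:ℝ) < y / 2 * Real.exp t := by positivity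
    rw [smul_eq_mul, abs_of_pos hb, hgdef]
    have h2 : y ^ 2 / (4 * (y / 2 * Real.exp t)) = y / 2 * Real.exp (-t) := by
      rw [Real.exp_neg]
      field_simp
      ring
    have h3 : (y / 2 * Real.exp t) ^ (s - 1) = (y/2) ^ (s-1) * rexp (t * (s-1)) := by
      rw [Real.mul_rpow hy2.le he.le, Real.exp_mul]
    have h4 : y / 2 * Real.exp t + y ^ 2 / (4 * (y / 2 * Real.exp t)) = y * Real.cosh t := by
      rw [h2, Real.cosh_eq]; ring
    simp only [h3, h4]
    rw [show rexp (s*t) = rexp t * rexp (t*(s-1)) by rw [← Real.exp_add]; congr 1; ring, hpow]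
    ring
  have h1 := integral_image_eq_integral_abs_deriv_smul measurableSet_Ioi hderiv1 hinj1 g
  rw [image_pos hy2] at h1
  rw [setIntegral_congr_fun measurableSet_Ioi key1] at h1
  -- negative branch
  have hderiv2 : ∀ t ∈ Ioi (0:ℝ),
      HasDerivWithinAt (fun t : ℝ => y / 2 * Real.exp (-t)) (-(y / 2 * Real.exp (-t))) (Ioi 0) t := by
    intro t _
    have h : HasDerivAt (fun t : ℝ => Real.exp (-t)) (Real.exp (-t) * (-1)) t :=
      (Real.hasDerivAt_exp (-t)).comp t (hasDerivAt_neg t)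
    have := (h.const_mul (y/2)).hasDerivWithinAt (s := Ioi 0)
    exact this.congr_deriv (by ring)
  have hinj2 : InjOn (fun t : ℝ => y / 2 * Real.exp (-t)) (Ioi 0) :=
    fun a _ b _ h =>
      neg_injective (Real.exp_injective (mul_left_cancel₀ (ne_of_gt hy2) h))
  have key2 : ∀ t ∈ Ioi (0:ℝ),
      |(-(y / 2 * Real.exp (-t)))| • g (y / 2 * Real.exp (-t))
        = (y/2) ^ s * (rexp (-(s * t)) * rexp (-(y * Real.cosh t))) := by
    intro t _
    have he : (0:ℝ) < Real.exp (-t) := Real.exp_pos _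
    have hb : (0:ℝ) < y / 2 * Real.exp (-t) := by positivity
    rw [smul_eq_mul, abs_neg, abs_of_pos hb, hgdef]
    have h2 : y ^ 2 / (4 * (y / 2 * Real.exp (-t))) = y / 2 * Real.exp t := by
      rw [Real.exp_neg]
      field_simp
      ring
    have h3 : (y / 2 * Real.exp (-t)) ^ (s - 1) = (y/2) ^ (s-1) * rexp (-t * (s-1)) := by
      rw [Real.mul_rpow hy2.le he.le, Real.exp_mul]
    have h4 : y / 2 * Real.exp (-t) + y ^ 2 / (4 * (y / 2 * Real.exp (-t))) = y * Real.cosh t := by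
      rw [h2, Real.cosh_eq]; ring
    simp only [h3, h4]
    rw [show rexp (-(s*t)) = rexp (-t) * rexp (-t*(s-1)) by rw [← Real.exp_add]; congr 1; ring,
      hpow]
    ring
  have h2 := integral_image_eq_integral_abs_deriv_smul measurableSet_Ioi hderiv2 hinj2 g
  rw [image_neg hy2] at h2
  rw [setIntegral_congr_fun measurableSet_Ioi key2] at h2
  -- integrability of transformed integrands
  have hintA : IntegrableOn
      (fun t : ℝ => (y/2) ^ s * (rexp (s * t) * rexp (-(y * Real.cosh t)))) (Ioi 0) := by
    have hA := (integrableOn_image_iff_integrableOn_abs_deriv_smul measurableSet_Ioi hderiv1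
      hinj1 g).mp (by rw [image_pos hy2]; exact hgi.mono_set (Ioi_subset_Ioi hy2.le))
    exact hA.congr_fun key1 measurableSet_Ioi
  have hintB : IntegrableOn
      (fun t : ℝ => (y/2) ^ s * (rexp (-(s * t)) * rexp (-(y * Real.cosh t)))) (Ioi 0) := by
    have hB := (integrableOn_image_iff_integrableOn_abs_deriv_smul measurableSet_Ioi hderiv2
      hinj2 g).mp (by rw [image_neg hy2]; exact hgi.mono_set Ioo_subset_Ioi_self)
    exact hB.congr_fun key2 measurableSet_Ioi
  -- split the domain
  have hsplit : ∫ v in Ioi (0:ℝ), g v = (∫ v in Ioo 0 (y/2), g v) + ∫ v in Ici (y/2), g v := by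
    rw [← setIntegral_union ((Iio_disjoint_Ici le_rfl).mono_left Ioo_subset_Iio_self)
      measurableSet_Ici (hgi.mono_set Ioo_subset_Ioi_self)
      (hgi.mono_set (fun x hx => lt_of_lt_of_le hy2 hx)),
      Ioo_union_Ici_eq_Ioi hy2]
  rw [hsplit, integral_Ici_eq_integral_Ioi, h1, h2, ← integral_add hintB hintA,
    besselK, ← integral_const_mul, ← integral_const_mul]
  apply setIntegral_congr_fun measurableSet_Ioi
  intro t _
  simp only
  rw [Real.cosh_eq (s*t)]
  ring

lemma psi_eq {s : ℝ} (hs : 0 < s) (y : ℝ) :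
    psi s y = (1 / Real.Gamma s) *
      ∫ v in Ioi (0:ℝ), v ^ (s - 1) * rexp (-(v + y ^ 2 / (4 * v))) := by
  have hΓ : (0:ℝ) < Real.Gamma s := Real.Gamma_pos_of_pos hs
  rcases eq_or_ne y 0 with rfl | hy
  · rw [psi, if_pos rfl]
    have : ∫ v in Ioi (0:ℝ), v ^ (s-1) * rexp (-(v + (0:ℝ)^2 / (4*v))) = Real.Gamma s := by
      rw [Real.Gamma_eq_integral hs]
      refine setIntegral_congr_fun measurableSet_Ioi (fun v hv => ?_)
      norm_num [mul_comm]
    rw [this]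
    field_simp
  · have h0 : 0 < |y| := abs_pos.mpr hy
    have hsq : y^2 = |y|^2 := (sq_abs y).symm
    rw [psi, if_neg hy, hsq, besselK_key hs h0]
    have h2s : (0:ℝ) < (2:ℝ) ^ s := Real.rpow_pos_of_pos two_pos s
    rw [Real.div_rpow h0.le (by norm_num : (0:ℝ) ≤ 2),
      Real.rpow_sub two_pos, Real.rpow_one]
    field_simp

lemma my_ofReal_integral (f : ℝ → ℝ) (μ : Measure ℝ) :
    ((∫ x, f x ∂μ : ℝ) : ℂ) = ∫ x, (f x : ℂ) ∂μ := integral_ofReal.symm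

lemma gauss_ft {v : ℝ} (hv : 0 < v) (ξ : ℝ) :
    ∫ y : ℝ, Complex.exp (-(Complex.I * ξ * y)) * ((rexp (-(y^2/(4*v))) : ℝ) : ℂ)
      = (Real.sqrt (4*π*v) : ℂ) * Complex.exp (-(v * ξ^2) : ℝ) := by
  have hb : (0:ℝ) < 1/(4*v) := by positivity
  have hvne : (v:ℂ) ≠ 0 := Complex.ofReal_ne_zero.mpr hv.ne'
  have h := fourierIntegral_gaussian (b := ((1/(4*v) : ℝ):ℂ))
    (by simpa using hb) (-ξ : ℂ)
  have hpt : ∀ y : ℝ,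
      Complex.exp (Complex.I * (-ξ:ℂ) * y) * Complex.exp (-((1/(4*v):ℝ):ℂ) * (y:ℂ)^2)
        = Complex.exp (-(Complex.I * ξ * y)) * ((rexp (-(y^2/(4*v))) : ℝ) : ℂ) := by
    intro y
    push_cast
    rw [show Complex.I * (-ξ:ℂ) * y = -(Complex.I * ξ * y) by ring]
    congr 2
    field_simp
  simp_rw [hpt] at h
  rw [h]
  congr 1
  · rw [show ((π:ℂ) / ((1/(4*v):ℝ):ℂ)) = ((4*π*v : ℝ) : ℂ) by push_cast; field_simp,
      show ((1:ℂ)/2) = ((1/2 : ℝ) : ℂ) by norm_num,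
      ← Complex.ofReal_cpow (by positivity), Real.sqrt_eq_rpow]
  · congr 1
    push_cast
    field_simp

lemma inner_val {s : ℝ} {v : ℝ} (hv : 0 < v) (ξ : ℝ) :
    ∫ y : ℝ, Complex.exp (-(Complex.I*ξ*y)) * ((v^(s-1) * rexp (-(v + y^2/(4*v))) : ℝ):ℂ)
      = (((v^(s-1) * rexp (-v) * Real.sqrt (4*π*v)) * rexp (-(v*ξ^2)) : ℝ) : ℂ) := by
  have hpt : ∀ y:ℝ, Complex.exp (-(Complex.I*ξ*y)) * ((v^(s-1) * rexp (-(v + y^2/(4*v))) : ℝ):ℂ)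
      = ((v^(s-1)*rexp (-v) : ℝ) : ℂ) *
        (Complex.exp (-(Complex.I*ξ*y)) * ((rexp (-(y^2/(4*v))) : ℝ):ℂ)) := by
    intro y
    rw [show -(v + y^2/(4*v)) = -v + -(y^2/(4*v)) by ring, Real.exp_add]
    push_cast
    ring
  simp_rw [hpt]
  rw [integral_const_mul, gauss_ft hv ξ]
  push_cast
  ring

lemma norm_F {s : ℝ} (ξ : ℝ) (v y : ℝ) (hv : 0 < v) :
    ‖Complex.exp (-(Complex.I*ξ*y)) * ((v^(s-1) * rexp (-(v + y^2/(4*v))) : ℝ):ℂ)‖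
      = v^(s-1) * rexp (-(v + y^2/(4*v))) := by
  rw [norm_mul, Complex.norm_exp, Complex.norm_real, Real.norm_eq_abs,
    show (-(Complex.I*ξ*y)).re = 0 by simp, Real.exp_zero, one_mul, _root_.abs_mul,
    _root_.abs_of_nonneg (Real.rpow_nonneg hv.le _),
    _root_.abs_of_nonneg (Real.exp_pos _).le]

lemma psiHat_eq {s : ℝ} (hs : 0 < s) (ξ : ℝ) :
    psiHat s ξ = ((Real.sqrt 2 * Real.Gamma (s + 1/2) / Real.Gamma s) *
      (1 + ξ^2) ^ (-(s + 1/2)) : ℝ) := by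
  have hΓ : (0:ℝ) < Real.Gamma s := Real.Gamma_pos_of_pos hs
  have hb : (0:ℝ) < 1 + ξ^2 := by positivity
  set F : ℝ → ℝ → ℂ :=
    fun v y => Complex.exp (-(Complex.I*ξ*y)) * ((v^(s-1) * rexp (-(v + y^2/(4*v))) : ℝ):ℂ)
    with hF
  -- integrability on the product
  have hInt : Integrable (Function.uncurry F) ((volume.restrict (Ioi 0)).prod volume) := by
    have hmes : AEStronglyMeasurable (Function.uncurry F)
        ((volume.restrict (Ioi 0)).prod volume) := by
      apply Measurable.aestronglyMeasurable
      apply Measurable.mul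
      · exact Complex.measurable_exp.comp (by fun_prop)
      · apply Complex.measurable_ofReal.comp
        apply Measurable.mul
        · fun_prop
        · fun_prop
    rw [integrable_prod_iff hmes]
    constructor
    · filter_upwards [ae_restrict_mem measurableSet_Ioi] with v hv
      have hv0 : (0:ℝ) < v := hv
      have h4v : (0:ℝ) < 1/(4*v) := by positivity
      have hre : Integrable (fun y : ℝ => v^(s-1) * rexp (-(v + y^2/(4*v)))) := by
        refine ((integrable_exp_neg_mul_sq h4v).const_mul (v^(s-1) * rexp (-v))).congr ?_
        refine Eventually.of_forall (fun y => ?_)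
        beta_reduce
        rw [show -(v + y^2/(4*v)) = -v + -(1/(4*v)) * y^2 by field_simp; ring, Real.exp_add]
        ring
      refine (hre.ofReal (𝕜 := ℂ)).bdd_mul ?_ (c := 1) (Eventually.of_forall fun y => ?_)
      · exact (Complex.measurable_exp.comp (by fun_prop)).aestronglyMeasurable
      · rw [Complex.norm_exp]
        simp
    · refine (((Real.GammaIntegral_convergent
        (by linarith : (0:ℝ) < s + 1/2)).const_mul (Real.sqrt (4*π))).congr ?_)
      filter_upwards [ae_restrict_mem measurableSet_Ioi] with v hv
      have hv0 : (0:ℝ) < v := hv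
      have h4v : (0:ℝ) < 1/(4*v) := by positivity
      have : ∀ y : ℝ, ‖Function.uncurry F (v, y)‖ = (v^(s-1) * rexp (-v)) * rexp (-(1/(4*v)) * y^2) := by
        intro y
        rw [Function.uncurry, hF]
        simp only
        rw [norm_F ξ v y hv0, show -(v + y^2/(4*v)) = -v + -(1/(4*v)) * y^2 by field_simp; ring,
          Real.exp_add]
        ring
      simp_rw [this]
      rw [integral_const_mul, integral_gaussian]
      rw [show π / (1/(4*v)) = 4*π*v by field_simp]
      rw [show Real.sqrt (4*π*v) = Real.sqrt (4*π) * v ^ (1/2 : ℝ) by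
        rw [← Real.sqrt_eq_rpow, ← Real.sqrt_mul (by positivity) v, mul_assoc]]
      rw [show v ^ (s + 1/2 - 1) = v ^ (s-1) * v ^ (1/2:ℝ) by
        rw [← Real.rpow_add hv0]; ring_nf]
      ring
  -- swap
  rw [psiHat]
  have hps : ∀ y : ℝ, Complex.exp (-(Complex.I*ξ*y)) * (psi s y : ℂ)
      = ((1/Real.Gamma s : ℝ) : ℂ) * ∫ v in Ioi (0:ℝ), F v y := by
    intro y
    rw [psi_eq hs y, hF]
    simp only
    rw [Complex.ofReal_mul, my_ofReal_integral, mul_left_comm]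
    congr 1
    exact (integral_const_mul _ _).symm
  simp_rw [hps]
  rw [integral_const_mul, ← integral_integral_swap hInt]
  rw [setIntegral_congr_fun measurableSet_Ioi (fun v hv => inner_val (s := s) hv ξ)]
  rw [← my_ofReal_integral]
  have hval : ∫ v in Ioi (0:ℝ), (v^(s-1) * rexp (-v) * Real.sqrt (4*π*v)) * rexp (-(v*ξ^2))
      = Real.sqrt (4*π) * ((1+ξ^2) ^ (-(s+1/2)) * Real.Gamma (s+1/2)) := by
    have h := integral_rpow_mul_exp_neg_mul_rpow (p := 1) (q := s - 1/2) (b := 1+ξ^2)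
      one_pos (by linarith) hb
    simp_rw [Real.rpow_one] at h
    have hstep : ∫ v in Ioi (0:ℝ), (v^(s-1) * rexp (-v) * Real.sqrt (4*π*v)) * rexp (-(v*ξ^2))
        = Real.sqrt (4*π) * ∫ v in Ioi (0:ℝ), v ^ (s-1/2) * rexp (-(1+ξ^2)*v) := by
      rw [← integral_const_mul]
      refine setIntegral_congr_fun measurableSet_Ioi (fun v hv => ?_)
      have hv0 : (0:ℝ) < v := hv
      have e1 : rexp (-v) * rexp (-(v*ξ^2)) = rexp (-(1+ξ^2)*v) := by
        rw [← Real.exp_add]; congr 1; ring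
      have e2 : Real.sqrt (4*π*v) = Real.sqrt (4*π) * v^(1/2:ℝ) := by
        rw [← Real.sqrt_eq_rpow, ← Real.sqrt_mul (by positivity) v, mul_assoc]
      have e3 : v ^ (s-1) * v^(1/2:ℝ) = v ^ (s - 1/2) := by
        rw [← Real.rpow_add hv0]; ring_nf
      calc v^(s-1) * rexp (-v) * Real.sqrt (4*π*v) * rexp (-(v*ξ^2))
          = Real.sqrt (4*π) * ((v^(s-1) * v^(1/2:ℝ)) * (rexp (-v) * rexp (-(v*ξ^2)))) := by
            rw [e2]; ring
        _ = Real.sqrt (4*π) * (v ^ (s-1/2) * rexp (-(1+ξ^2)*v)) := by rw [e1, e3]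
    rw [hstep, h]
    rw [show (-(s - 1/2 + 1)/1 : ℝ) = -(s+1/2) by ring, show ((s - 1/2 + 1)/1 : ℝ) = s+1/2 by ring]
    ring
  rw [hval]
  have h4 : Real.sqrt (4*π) = Real.sqrt 2 * Real.sqrt (2*π) := by
    rw [← Real.sqrt_mul (by norm_num : (0:ℝ) ≤ 2)]
    congr 1
    ring
  have hsq : Real.sqrt (2*π) ≠ 0 := ne_of_gt (Real.sqrt_pos.mpr (by positivity))
  rw [show ((1:ℂ)/(Real.sqrt (2*π):ℂ)) = ((1/Real.sqrt (2*π) : ℝ) : ℂ) by push_cast; ring,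
    ← Complex.ofReal_mul, ← Complex.ofReal_mul]
  congr 1
  rw [h4]
  field_simp

lemma rpow_two' (x : ℝ) : x ^ (2:ℝ) = x ^ 2 := by
  rw [show (2:ℝ) = ((2:ℕ):ℝ) by norm_num, Real.rpow_natCast]

lemma integrable_abs_rpow_gauss {a u : ℝ} (ha : -1 < a) (hu : 0 < u) :
    Integrable (fun x : ℝ => |x| ^ a * rexp (-u * x^2)) := by
  have h0 : IntegrableOn (fun x : ℝ => x ^ a * rexp (-u * x^2)) (Ioi 0) :=
    integrableOn_rpow_mul_exp_neg_mul_sq hu ha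
  have h0' : IntegrableOn (fun x : ℝ => |x| ^ a * rexp (-u * x^2)) (Ioi 0) :=
    h0.congr_fun (fun x hx => by rw [abs_of_pos hx]) measurableSet_Ioi
  rw [← integrableOn_univ, ← Iic_union_Ioi (a := (0:ℝ)), integrableOn_union]
  refine ⟨?_, h0'⟩
  rw [← Measure.map_neg_eq_self (volume : Measure ℝ)]
  have m : MeasurableEmbedding fun x : ℝ => -x := (Homeomorph.neg ℝ).measurableEmbedding
  rw [m.integrableOn_map_iff]
  simp only [Function.comp_def, abs_neg, neg_sq, neg_preimage, neg_Iic, neg_zero]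
  rw [integrableOn_Ici_iff_integrableOn_Ioi]
  exact h0'

lemma gauss_moment {a u : ℝ} (ha : -1 < a) (hu : 0 < u) :
    ∫ x : ℝ, |x| ^ a * rexp (-u * x^2)
      = Real.Gamma ((a+1)/2) * u ^ (-(a+1)/2) := by
  have h1 := integral_comp_abs (f := fun t : ℝ => t ^ a * rexp (-u * t^2))
  simp only [sq_abs] at h1
  have h2 := integral_rpow_mul_exp_neg_mul_rpow (p := 2) (q := a) (b := u) two_pos ha hu
  simp_rw [rpow_two'] at h2
  rw [h1, h2]
  ring

lemma W_eq {s α : ℝ} (hs : 0 < s) (hα1 : -(1/2) < α) (hα2 : α < 2*s + 1/2) :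
    ∫ ξ : ℝ, |ξ| ^ (2*α) * (1+ξ^2) ^ (-(2*s+1))
      = Real.Gamma (α+1/2) * Real.Gamma (2*s-α+1/2) / Real.Gamma (2*s+1) := by
  have hq : (-1:ℝ) < 2*α := by linarith
  have hΓs : (0:ℝ) < Real.Gamma (2*s+1) := Real.Gamma_pos_of_pos (by linarith)
  set G : ℝ → ℝ → ℝ :=
    fun u ξ => u^(2*s) * rexp (-u) * (|ξ|^(2*α) * rexp (-u * ξ^2)) with hG
  have hrep : ∀ ξ : ℝ, |ξ| ^ (2*α) * (1+ξ^2) ^ (-(2*s+1))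
      = (1/Real.Gamma (2*s+1)) * ∫ u in Ioi (0:ℝ), G u ξ := by
    intro ξ
    have hbξ : (0:ℝ) < 1+ξ^2 := by positivity
    have h := integral_rpow_mul_exp_neg_mul_rpow (p := 1) (q := 2*s) (b := 1+ξ^2)
      one_pos (by linarith) hbξ
    simp_rw [Real.rpow_one] at h
    have hsplit : ∀ u : ℝ, G u ξ = |ξ|^(2*α) * (u ^ (2*s) * rexp (-(1+ξ^2)*u)) := by
      intro u
      rw [hG]
      simp only
      rw [show (-(1+ξ^2)*u : ℝ) = -u + -u*ξ^2 by ring, Real.exp_add]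
      ring
    simp_rw [hsplit]
    rw [integral_const_mul, h,
      show (-(2*s+1)/1 : ℝ) = -(2*s+1) by ring, show ((2*s+1)/1:ℝ) = 2*s+1 by ring]
    field_simp
  simp_rw [hrep]
  rw [integral_const_mul]
  have hInt : Integrable (Function.uncurry G) ((volume.restrict (Ioi 0)).prod volume) := by
    have hmes : AEStronglyMeasurable (Function.uncurry G)
        ((volume.restrict (Ioi 0)).prod volume) := by
      apply Measurable.aestronglyMeasurable
      fun_prop
    rw [integrable_prod_iff hmes]
    constructor
    · filter_upwards [ae_restrict_mem measurableSet_Ioi] with u hu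
      exact ((integrable_abs_rpow_gauss hq hu).const_mul (u^(2*s) * rexp (-u))).congr
        (Eventually.of_forall fun ξ => rfl)
    · refine ((Real.GammaIntegral_convergent
        (by linarith : (0:ℝ) < 2*s - α + 1/2)).const_mul (Real.Gamma (α+1/2))).congr ?_
      filter_upwards [ae_restrict_mem measurableSet_Ioi] with u hu
      have hu0 : (0:ℝ) < u := hu
      have hnn : ∀ ξ : ℝ, ‖Function.uncurry G (u, ξ)‖ = G u ξ := by
        intro ξ
        rw [Function.uncurry]
        simp only
        rw [Real.norm_eq_abs, abs_of_nonneg]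
        rw [hG]
        have := Real.rpow_nonneg (abs_nonneg ξ) (2*α)
        positivity
      simp_rw [hnn, hG]
      beta_reduce
      rw [integral_const_mul, gauss_moment hq hu0,
        show ((2*α+1)/2 : ℝ) = α + 1/2 by ring, show (-(2*α+1)/2 : ℝ) = -(α+1/2) by ring]
      rw [show u ^ (2*s - α + 1/2 - 1) = u ^ (2*s) * u ^ (-(α+1/2)) by
        rw [← Real.rpow_add hu0]; ring_nf]
      ring
  rw [← integral_integral_swap hInt]
  have hfin : ∫ u in Ioi (0:ℝ), ∫ ξ : ℝ, G u ξ
      = Real.Gamma (α+1/2) * Real.Gamma (2*s-α+1/2) := by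
    have hpt : ∀ u ∈ Ioi (0:ℝ), (∫ ξ : ℝ, G u ξ)
        = Real.Gamma (α+1/2) * (rexp (-u) * u ^ (2*s-α+1/2-1)) := by
      intro u hu
      have hu0 : (0:ℝ) < u := hu
      rw [hG]
      simp only
      rw [integral_const_mul, gauss_moment hq hu0,
        show ((2*α+1)/2 : ℝ) = α + 1/2 by ring, show (-(2*α+1)/2 : ℝ) = -(α+1/2) by ring]
      rw [show u ^ (2*s - α + 1/2 - 1) = u ^ (2*s) * u ^ (-(α+1/2)) by
        rw [← Real.rpow_add hu0]; ring_nf]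
      ring
    rw [setIntegral_congr_fun measurableSet_Ioi hpt, integral_const_mul,
      ← Real.Gamma_eq_integral (by linarith : (0:ℝ) < 2*s - α + 1/2)]
  rw [hfin]
  field_simp

lemma hpt_main {s : ℝ} (hs : 0 < s) (α ξ : ℝ) :
    |ξ| ^ (2*α) * ‖psiHat s ξ‖ ^ 2
      = (Real.sqrt 2 * Real.Gamma (s + 1/2) / Real.Gamma s)^2 *
          (|ξ| ^ (2*α) * (1+ξ^2) ^ (-(2*s+1))) := by
  have hΓ : (0:ℝ) < Real.Gamma s := Real.Gamma_pos_of_pos hs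
  have hb : (0:ℝ) < 1+ξ^2 := by positivity
  set C : ℝ := Real.sqrt 2 * Real.Gamma (s + 1/2) / Real.Gamma s with hC
  have hC0 : 0 < C := by
    rw [hC]
    have := Real.Gamma_pos_of_pos (show (0:ℝ) < s + 1/2 by linarith)
    positivity
  rw [psiHat_eq hs ξ, Complex.norm_real, Real.norm_eq_abs,
    _root_.abs_of_nonneg (by positivity : (0:ℝ) ≤ C * (1+ξ^2) ^ (-(s+1/2))),
    mul_pow,
    show ((1+ξ^2) ^ (-(s+1/2)))^2 = (1+ξ^2) ^ (-(2*s+1)) by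
      rw [← Real.rpow_natCast ((1+ξ^2) ^ (-(s+1/2))) 2, ← Real.rpow_mul hb.le]
      norm_num
      ring_nf]
  ring

/-- for `s > 0` and `−1/2 < α < 2s + 1/2`,
`∫ |ξ|^{2α}·|ψ̂_s(ξ)|² dξ = (Γ(s+1/2)²/(s·Γ(2s)·Γ(s)²))·Γ(α+1/2)·Γ(2s−α+1/2)`;
moreover for `α ≥ 2s + 1/2` the integral is infinite. -/
theorem psi_fourier_weighted_norm (s : ℝ) (hs : 0 < s) :
    (∀ α : ℝ, -(1 / 2) < α → α < 2 * s + 1 / 2 →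
      ∫ ξ : ℝ, |ξ| ^ (2 * α) * ‖psiHat s ξ‖ ^ 2
        = Real.Gamma (s + 1 / 2) ^ 2 / (s * Real.Gamma (2 * s) * Real.Gamma s ^ 2) *
            Real.Gamma (α + 1 / 2) * Real.Gamma (2 * s - α + 1 / 2)) ∧
    (∀ α : ℝ, 2 * s + 1 / 2 ≤ α →
      ∫⁻ ξ : ℝ, ENNReal.ofReal (|ξ| ^ (2 * α) * ‖psiHat s ξ‖ ^ 2) = ⊤) := by
  have hΓ : (0:ℝ) < Real.Gamma s := Real.Gamma_pos_of_pos hs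
  have hΓ2 : (0:ℝ) < Real.Gamma (2*s) := Real.Gamma_pos_of_pos (by linarith)
  have hΓh : (0:ℝ) < Real.Gamma (s+1/2) := Real.Gamma_pos_of_pos (by linarith)
  constructor
  · intro α hα1 hα2
    simp_rw [hpt_main hs α]
    rw [integral_const_mul, W_eq hs hα1 hα2,
      show (2*s+1 : ℝ) = 2*s + 1 by ring,
      Real.Gamma_add_one (by linarith : (2*s:ℝ) ≠ 0),
      div_pow, mul_pow, Real.sq_sqrt (by norm_num : (0:ℝ) ≤ 2)]
    field_simp
  · intro α hα
    by_contra hne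
    set C : ℝ := Real.sqrt 2 * Real.Gamma (s + 1/2) / Real.Gamma s with hC
    have hC0 : 0 < C := by rw [hC]; positivity
    set f : ℝ → ℝ := fun ξ => C^2 * (|ξ| ^ (2*α) * (1+ξ^2) ^ (-(2*s+1))) with hf
    have hfeq : ∀ ξ : ℝ, |ξ| ^ (2 * α) * ‖psiHat s ξ‖ ^ 2 = f ξ :=
      fun ξ => hpt_main hs α ξ
    simp_rw [hfeq] at hne
    have hfnn : ∀ ξ, 0 ≤ f ξ := by
      intro ξ
      have h1 : (0:ℝ) ≤ |ξ| ^ (2*α) := Real.rpow_nonneg (abs_nonneg ξ) _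
      have h2 : (0:ℝ) < (1+ξ^2) ^ (-(2*s+1)) := Real.rpow_pos_of_pos (by positivity) _
      positivity
    have hmeas : Measurable f := by fun_prop
    have hfin : ∫⁻ ξ in Ioi (1:ℝ), ENNReal.ofReal (f ξ) < ⊤ :=
      lt_of_le_of_lt (setLIntegral_le_lintegral _ _) (lt_top_iff_ne_top.mpr hne)
    have hIntf : IntegrableOn f (Ioi 1) := by
      refine ⟨hmeas.aestronglyMeasurable, ?_⟩
      rw [hasFiniteIntegral_iff_norm]
      refine lt_of_le_of_lt (le_of_eq (lintegral_congr fun ξ => ?_)) hfin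
      rw [Real.norm_eq_abs, _root_.abs_of_nonneg (hfnn ξ)]
    set c₀ : ℝ := C^2 * (2:ℝ) ^ (-(2*s+1)) with hc₀
    have hc₀0 : 0 < c₀ := by
      have : (0:ℝ) < (2:ℝ) ^ (-(2*s+1)) := Real.rpow_pos_of_pos two_pos _
      positivity
    have hbound : ∀ ξ ∈ Ioi (1:ℝ), c₀ * ξ ^ (-1:ℝ) ≤ f ξ := by
      intro ξ hξ
      have hξ1 : (1:ℝ) < ξ := hξ
      have hξ0 : (0:ℝ) < ξ := by linarith
      have habs : |ξ| = ξ := abs_of_pos hξ0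
      have h1 : (2*ξ^2 : ℝ) ^ (-(2*s+1)) ≤ (1+ξ^2) ^ (-(2*s+1)) :=
        Real.rpow_le_rpow_of_nonpos (by positivity) (by nlinarith) (by linarith)
      have h2 : (2*ξ^2 : ℝ) ^ (-(2*s+1))
          = (2:ℝ) ^ (-(2*s+1)) * ξ ^ (2 * -(2*s+1)) := by
        rw [Real.mul_rpow (by norm_num) (by positivity),
          show (ξ^2 : ℝ) = ξ ^ (2:ℝ) by
            rw [show (2:ℝ) = ((2:ℕ):ℝ) by norm_num, Real.rpow_natCast],
          ← Real.rpow_mul hξ0.le]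
      have h3 : ξ ^ (4*s+1 : ℝ) ≤ ξ ^ (2*α) :=
        Real.rpow_le_rpow_of_exponent_le hξ1.le (by linarith)
      have h4 : ξ ^ (4*s+1 : ℝ) * ξ ^ (2 * -(2*s+1)) = ξ ^ (-1:ℝ) := by
        rw [← Real.rpow_add hξ0]
        congr 1
        ring
      calc c₀ * ξ ^ (-1:ℝ)
          = C^2 * (ξ ^ (4*s+1 : ℝ) * ((2:ℝ) ^ (-(2*s+1)) * ξ ^ (2 * -(2*s+1)))) := by
            rw [hc₀]; rw [← h4]; ring
        _ = C^2 * (ξ ^ (4*s+1 : ℝ) * (2*ξ^2 : ℝ) ^ (-(2*s+1))) := by rw [h2]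
        _ ≤ C^2 * (ξ ^ (2*α) * (1+ξ^2) ^ (-(2*s+1))) := by
            have hA : (0:ℝ) ≤ (2*ξ^2 : ℝ) ^ (-(2*s+1)) := Real.rpow_nonneg (by positivity) _
            have hB : (0:ℝ) ≤ ξ ^ (2*α) := Real.rpow_nonneg hξ0.le _
            have := mul_le_mul h3 h1 hA hB
            nlinarith [sq_nonneg C]
        _ = f ξ := by simp only [hf, habs]
    have hInt1 : IntegrableOn (fun ξ : ℝ => c₀ * ξ ^ (-1:ℝ)) (Ioi 1) := by
      refine hIntf.mono' ?_ ?_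
      · apply Measurable.aestronglyMeasurable
        fun_prop
      · filter_upwards [ae_restrict_mem measurableSet_Ioi] with ξ hξ
        have hξ0 : (0:ℝ) < ξ := lt_trans one_pos hξ
        rw [Real.norm_eq_abs, _root_.abs_of_nonneg
          (by positivity : (0:ℝ) ≤ c₀ * ξ ^ (-1:ℝ))]
        exact hbound ξ hξ
    have hInt2 : IntegrableOn (fun ξ : ℝ => ξ ^ (-1:ℝ)) (Ioi 1) := by
      refine (hInt1.const_mul c₀⁻¹).congr (Eventually.of_forall fun ξ => ?_)
      field_simp
    rw [integrableOn_Ioi_rpow_iff zero_lt_one] at hInt2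
    norm_num at hInt2
end
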